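/- arXiv:2205.06868 — 3 statements merged into one kernel-verified Lean document; each statement's English description precedes it below -/
import Mathlib

section
/- Let (Z_j, Z_k) be a centered bivariate Gaussian vector with unit variances and correlation ρ ∈ (−1, 1). Define binary variables X_j = 1{Z_j > Δ_j} and X_k = 1{Z_k > Δ_k} for cutoffs Δ_j, Δ_k ∈ ℝ. Then the population Kendall's tau of (X_j, X_k) equals 2·(Φ_2(Δ_j, Δ_k; ρ) − Φ(Δ_j)·Φ(Δ_k)). (Bridging function for a binary–binary pair, F_bb, from Theorem 1.) -/
open MeasureTheory ProbabilityTheory Real Matrix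
open scoped NNReal ENNReal

noncomputable section

/-- Density of a centered multivariate Gaussian distribution on `ℝ^d`
with covariance matrix `S`. -/
def mvGaussPDF {d : ℕ} (S : Matrix (Fin d) (Fin d) ℝ) (x : Fin d → ℝ) : ℝ :=
  (Real.sqrt ((2 * Real.pi) ^ d * S.det))⁻¹ * Real.exp (-(x ⬝ᵥ S⁻¹ *ᵥ x) / 2)

/-- Centered multivariate Gaussian measure on `ℝ^d` with covariance matrix `S`. -/
def mvGauss {d : ℕ} (S : Matrix (Fin d) (Fin d) ℝ) : Measure (Fin d → ℝ) :=
  MeasureTheory.volume.withDensity fun x => ENNReal.ofReal (mvGaussPDF S x)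

/-- `Φ_d(a; S) = P(U₁ ≤ a₁, …, U_d ≤ a_d)` for a centered Gaussian vector `U` with
covariance matrix `S`.  Extended-real bounds implement the conventions that a `+∞`
bound drops the corresponding constraint, while a `-∞` bound gives probability `0`. -/
def PhiVec {d : ℕ} (a : Fin d → EReal) (S : Matrix (Fin d) (Fin d) ℝ) : ℝ :=
  (mvGauss S {x | ∀ i, (x i : EReal) ≤ a i}).toReal

/-- Standard normal CDF `Φ`, with extended-real argument (`Φ(+∞) = 1`, `Φ(-∞) = 0`). -/
def stdPhi (a : EReal) : ℝ :=
  (gaussianReal 0 1 {x : ℝ | (x : EReal) ≤ a}).toReal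

/-- The `2 × 2` correlation matrix with correlation `ρ`. -/
def corrMat (ρ : ℝ) : Matrix (Fin 2) (Fin 2) ℝ := !![1, ρ; ρ, 1]

/-- Bivariate standard normal CDF `Φ₂(a, b; ρ)` with extended-real bounds. -/
def Phi2 (a b : EReal) (ρ : ℝ) : ℝ := PhiVec ![a, b] (corrMat ρ)

/-- The binary variable `1{z > Δ}` obtained by dichotomizing a latent variable `z`. -/
def binVar (Δ : ℝ) (z : ℝ) : ℝ := if Δ < z then 1 else 0

/-- The truncated variable `z · 1{z > Δ}` obtained by truncating a latent variable `z`. -/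
def truncVar (Δ : ℝ) (z : ℝ) : ℝ := if Δ < z then z else 0

/-- The ordinal variable `∑_{m=0}^{l-1} m · 1{Δ_m ≤ z < Δ_{m+1}}` obtained from a latent
variable `z` via extended-real cutoffs `Δ`. -/
def ordVar (l : ℕ) (Δ : ℕ → EReal) (z : ℝ) : ℝ :=
  ∑ m ∈ Finset.range l,
    (m : ℝ) * (if Δ m ≤ (z : EReal) ∧ (z : EReal) < Δ (m + 1) then 1 else 0)

/-! ### Auxiliary lemmas -/

lemma corr_det (ρ : ℝ) : (corrMat ρ).det = 1 - ρ^2 := by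
  simp [corrMat, Matrix.det_fin_two_of]; ring

lemma corr_inv (ρ : ℝ) : (corrMat ρ)⁻¹ = (1 - ρ^2)⁻¹ • !![1, -ρ; -ρ, 1] := by
  rw [Matrix.inv_def, corr_det, Ring.inverse_eq_inv', corrMat, Matrix.adjugate_fin_two_of]

lemma corr_qf (ρ : ℝ) (hρ : ρ ∈ Set.Ioo (-1:ℝ) 1) (x : Fin 2 → ℝ) :
    x ⬝ᵥ (corrMat ρ)⁻¹ *ᵥ x = (x 0)^2 + (x 1 - ρ * x 0)^2 / (1 - ρ^2) := by
  have hv : (0:ℝ) < 1 - ρ^2 := by nlinarith [hρ.1, hρ.2]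
  rw [corr_inv]
  simp [Matrix.mulVec, dotProduct, Fin.sum_univ_two]
  field_simp
  ring

lemma corr_qf' (ρ : ℝ) (hρ : ρ ∈ Set.Ioo (-1:ℝ) 1) (x : Fin 2 → ℝ) :
    x ⬝ᵥ (corrMat ρ)⁻¹ *ᵥ x = (x 1)^2 + (x 0 - ρ * x 1)^2 / (1 - ρ^2) := by
  have hv : (0:ℝ) < 1 - ρ^2 := by nlinarith [hρ.1, hρ.2]
  rw [corr_inv]
  simp [Matrix.mulVec, dotProduct, Fin.sum_univ_two]
  field_simp
  ring

lemma pdf_factor (ρ : ℝ) (hρ : ρ ∈ Set.Ioo (-1:ℝ) 1) (x : Fin 2 → ℝ) :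
    mvGaussPDF (corrMat ρ) x
      = gaussianPDFReal 0 1 (x 0)
        * gaussianPDFReal (ρ * x 0) (Real.toNNReal (1 - ρ^2)) (x 1) := by
  have hv : (0:ℝ) < 1 - ρ^2 := by nlinarith [hρ.1, hρ.2]
  have hc : ((Real.toNNReal (1 - ρ^2) : ℝ≥0) : ℝ) = 1 - ρ^2 := Real.coe_toNNReal _ hv.le
  rw [mvGaussPDF, corr_qf ρ hρ, corr_det, gaussianPDFReal, gaussianPDFReal, hc]
  have hsq : Real.sqrt ((2 * π) ^ 2 * (1 - ρ^2))
      = Real.sqrt (2 * π * 1) * Real.sqrt (2 * π * (1 - ρ^2)) := by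
    rw [← Real.sqrt_mul (by positivity)]
    ring_nf
  rw [hsq, mul_inv, NNReal.coe_one]
  have hexp : Real.exp (-((x 0)^2 + (x 1 - ρ * x 0)^2 / (1 - ρ^2)) / 2)
      = Real.exp (-(x 0 - 0)^2 / (2*1)) * Real.exp (-(x 1 - ρ * x 0)^2 / (2*(1 - ρ^2))) := by
    rw [← Real.exp_add]
    congr 1
    field_simp
    ring
  rw [hexp]
  ring

lemma pdf_factor' (ρ : ℝ) (hρ : ρ ∈ Set.Ioo (-1:ℝ) 1) (x : Fin 2 → ℝ) :
    mvGaussPDF (corrMat ρ) x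
      = gaussianPDFReal 0 1 (x 1)
        * gaussianPDFReal (ρ * x 1) (Real.toNNReal (1 - ρ^2)) (x 0) := by
  have hv : (0:ℝ) < 1 - ρ^2 := by nlinarith [hρ.1, hρ.2]
  have hc : ((Real.toNNReal (1 - ρ^2) : ℝ≥0) : ℝ) = 1 - ρ^2 := Real.coe_toNNReal _ hv.le
  rw [mvGaussPDF, corr_qf' ρ hρ, corr_det, gaussianPDFReal, gaussianPDFReal, hc]
  have hsq : Real.sqrt ((2 * π) ^ 2 * (1 - ρ^2))
      = Real.sqrt (2 * π * 1) * Real.sqrt (2 * π * (1 - ρ^2)) := by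
    rw [← Real.sqrt_mul (by positivity)]
    ring_nf
  rw [hsq, mul_inv, NNReal.coe_one]
  have hexp : Real.exp (-((x 1)^2 + (x 0 - ρ * x 1)^2 / (1 - ρ^2)) / 2)
      = Real.exp (-(x 1 - 0)^2 / (2*1)) * Real.exp (-(x 0 - ρ * x 1)^2 / (2*(1 - ρ^2))) := by
    rw [← Real.exp_add]
    congr 1
    field_simp
    ring
  rw [hexp]
  ring

lemma mvGauss_fst (ρ : ℝ) (hρ : ρ ∈ Set.Ioo (-1:ℝ) 1) (s0 : Set ℝ) :
    mvGauss (corrMat ρ) {x | x 0 ∈ s0} = gaussianReal 0 1 s0 := by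
  have hv : (0:ℝ) < 1 - ρ^2 := by nlinarith [hρ.1, hρ.2]
  have hv' : Real.toNNReal (1 - ρ^2) ≠ 0 := by
    simp only [ne_eq, Real.toNNReal_eq_zero, not_le]; linarith
  set F : ℝ × ℝ → ℝ≥0∞ := fun p =>
    ENNReal.ofReal (gaussianPDFReal 0 1 p.1
      * gaussianPDFReal (ρ * p.1) (Real.toNNReal (1 - ρ^2)) p.2) with hF
  have hFm : Measurable F := by
    apply Measurable.ennreal_ofReal
    unfold gaussianPDFReal
    fun_prop
  have hset : {x : Fin 2 → ℝ | x 0 ∈ s0}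
      = (MeasurableEquiv.piFinTwo fun _ => ℝ) ⁻¹' (s0 ×ˢ (Set.univ : Set ℝ)) := by
    ext x
    simp [MeasurableEquiv.piFinTwo_apply]
  rw [mvGauss, withDensity_apply' _, hset]
  have hcomp : ∀ x : Fin 2 → ℝ,
      ENNReal.ofReal (mvGaussPDF (corrMat ρ) x)
        = F ((MeasurableEquiv.piFinTwo fun _ => ℝ) x) := by
    intro x
    rw [hF, pdf_factor ρ hρ x]
    rfl
  calc ∫⁻ x in (MeasurableEquiv.piFinTwo fun _ => ℝ) ⁻¹' (s0 ×ˢ Set.univ),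
        ENNReal.ofReal (mvGaussPDF (corrMat ρ) x) ∂volume
      = ∫⁻ x in (MeasurableEquiv.piFinTwo fun _ => ℝ) ⁻¹' (s0 ×ˢ Set.univ),
        F ((MeasurableEquiv.piFinTwo fun _ => ℝ) x) ∂volume :=
        lintegral_congr fun x => hcomp x
    _ = ∫⁻ p in s0 ×ˢ Set.univ, F p ∂(volume : Measure (ℝ × ℝ)) :=
        (volume_preserving_piFinTwo fun _ => ℝ).setLIntegral_comp_preimage_emb
          (MeasurableEquiv.piFinTwo fun _ => ℝ).measurableEmbedding F _
    _ = ∫⁻ p, F p ∂(((volume : Measure ℝ).restrict s0).prod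
          ((volume : Measure ℝ).restrict Set.univ)) := by
        rw [Measure.prod_restrict, ← Measure.volume_eq_prod]
    _ = ∫⁻ a, (∫⁻ b, F (a, b) ∂((volume : Measure ℝ).restrict Set.univ))
          ∂((volume : Measure ℝ).restrict s0) :=
        lintegral_prod F hFm.aemeasurable
    _ = ∫⁻ a in s0, gaussianPDF 0 1 a ∂(volume : Measure ℝ) := by
        rw [Measure.restrict_univ]
        refine lintegral_congr fun a => ?_
        rw [hF]
        simp only
        calc ∫⁻ b, ENNReal.ofReal (gaussianPDFReal 0 1 a
              * gaussianPDFReal (ρ * a) (Real.toNNReal (1 - ρ^2)) b) ∂volume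
            = ∫⁻ b, ENNReal.ofReal (gaussianPDFReal 0 1 a)
              * gaussianPDF (ρ * a) (Real.toNNReal (1 - ρ^2)) b ∂volume := by
              refine lintegral_congr fun b => ?_
              rw [ENNReal.ofReal_mul (gaussianPDFReal_nonneg _ _ _)]
              rfl
          _ = ENNReal.ofReal (gaussianPDFReal 0 1 a)
              * ∫⁻ b, gaussianPDF (ρ * a) (Real.toNNReal (1 - ρ^2)) b ∂volume := by
              rw [lintegral_const_mul _ (measurable_gaussianPDF _ _)]
          _ = gaussianPDF 0 1 a := by
              rw [lintegral_gaussianPDF_eq_one _ hv', mul_one]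
              rfl
    _ = gaussianReal 0 1 s0 := (gaussianReal_apply 0 one_ne_zero s0).symm

lemma mvGauss_snd (ρ : ℝ) (hρ : ρ ∈ Set.Ioo (-1:ℝ) 1) (s1 : Set ℝ) :
    mvGauss (corrMat ρ) {x | x 1 ∈ s1} = gaussianReal 0 1 s1 := by
  have hv : (0:ℝ) < 1 - ρ^2 := by nlinarith [hρ.1, hρ.2]
  have hv' : Real.toNNReal (1 - ρ^2) ≠ 0 := by
    simp only [ne_eq, Real.toNNReal_eq_zero, not_le]; linarith
  set F : ℝ × ℝ → ℝ≥0∞ := fun p =>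
    ENNReal.ofReal (gaussianPDFReal 0 1 p.2
      * gaussianPDFReal (ρ * p.2) (Real.toNNReal (1 - ρ^2)) p.1) with hF
  have hFm : Measurable F := by
    apply Measurable.ennreal_ofReal
    unfold gaussianPDFReal
    fun_prop
  have hset : {x : Fin 2 → ℝ | x 1 ∈ s1}
      = (MeasurableEquiv.piFinTwo fun _ => ℝ) ⁻¹' ((Set.univ : Set ℝ) ×ˢ s1) := by
    ext x
    simp [MeasurableEquiv.piFinTwo_apply]
  rw [mvGauss, withDensity_apply' _, hset]
  have hcomp : ∀ x : Fin 2 → ℝ,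
      ENNReal.ofReal (mvGaussPDF (corrMat ρ) x)
        = F ((MeasurableEquiv.piFinTwo fun _ => ℝ) x) := by
    intro x
    rw [hF, pdf_factor' ρ hρ x]
    rfl
  calc ∫⁻ x in (MeasurableEquiv.piFinTwo fun _ => ℝ) ⁻¹' (Set.univ ×ˢ s1),
        ENNReal.ofReal (mvGaussPDF (corrMat ρ) x) ∂volume
      = ∫⁻ x in (MeasurableEquiv.piFinTwo fun _ => ℝ) ⁻¹' (Set.univ ×ˢ s1),
        F ((MeasurableEquiv.piFinTwo fun _ => ℝ) x) ∂volume :=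
        lintegral_congr fun x => hcomp x
    _ = ∫⁻ p in Set.univ ×ˢ s1, F p ∂(volume : Measure (ℝ × ℝ)) :=
        (volume_preserving_piFinTwo fun _ => ℝ).setLIntegral_comp_preimage_emb
          (MeasurableEquiv.piFinTwo fun _ => ℝ).measurableEmbedding F _
    _ = ∫⁻ p, F p ∂(((volume : Measure ℝ).restrict Set.univ).prod
          ((volume : Measure ℝ).restrict s1)) := by
        rw [Measure.prod_restrict, ← Measure.volume_eq_prod]
    _ = ∫⁻ b, (∫⁻ a, F (a, b) ∂((volume : Measure ℝ).restrict Set.univ))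
          ∂((volume : Measure ℝ).restrict s1) :=
        lintegral_prod_symm F hFm.aemeasurable
    _ = ∫⁻ b in s1, gaussianPDF 0 1 b ∂(volume : Measure ℝ) := by
        rw [Measure.restrict_univ]
        refine lintegral_congr fun b => ?_
        rw [hF]
        simp only
        calc ∫⁻ a, ENNReal.ofReal (gaussianPDFReal 0 1 b
              * gaussianPDFReal (ρ * b) (Real.toNNReal (1 - ρ^2)) a) ∂volume
            = ∫⁻ a, ENNReal.ofReal (gaussianPDFReal 0 1 b)
              * gaussianPDF (ρ * b) (Real.toNNReal (1 - ρ^2)) a ∂volume := by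
              refine lintegral_congr fun a => ?_
              rw [ENNReal.ofReal_mul (gaussianPDFReal_nonneg _ _ _)]
              rfl
          _ = ENNReal.ofReal (gaussianPDFReal 0 1 b)
              * ∫⁻ a, gaussianPDF (ρ * b) (Real.toNNReal (1 - ρ^2)) a ∂volume := by
              rw [lintegral_const_mul _ (measurable_gaussianPDF _ _)]
          _ = gaussianPDF 0 1 b := by
              rw [lintegral_gaussianPDF_eq_one _ hv', mul_one]
              rfl
    _ = gaussianReal 0 1 s1 := (gaussianReal_apply 0 one_ne_zero s1).symm

lemma binVar_measurable (Δ : ℝ) (i : Fin 2) :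
    Measurable fun x : Fin 2 → ℝ => binVar Δ (x i) := by
  unfold binVar
  exact Measurable.ite (measurableSet_lt measurable_const (measurable_pi_apply i))
    measurable_const measurable_const

lemma integral_ind {Ω : Type*} [MeasurableSpace Ω] (μ : Measure Ω) {s : Set Ω}
    (hs : MeasurableSet s) :
    ∫ ω, s.indicator (fun _ => (1:ℝ)) ω ∂μ = (μ s).toReal := by
  rw [integral_indicator_const (1:ℝ) hs, smul_eq_mul, mul_one, measureReal_def]

lemma prod_rep {Ω : Type*} (Δj Δk : ℝ) (U V : Ω → Fin 2 → ℝ) :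
    (fun ω => binVar Δj (U ω 0) * binVar Δk (V ω 1))
      = (U ⁻¹' {x | Δj < x 0} ∩ V ⁻¹' {x | Δk < x 1}).indicator (fun _ => (1:ℝ)) := by
  funext ω
  by_cases h1 : Δj < U ω 0 <;> by_cases h2 : Δk < V ω 1 <;>
    simp [binVar, Set.indicator, h1, h2, Set.mem_preimage, Set.mem_setOf_eq]

lemma bin_rep {Ω : Type*} (Δ : ℝ) (i : Fin 2) (U : Ω → Fin 2 → ℝ) :
    (fun ω => binVar Δ (U ω i)) = (U ⁻¹' {x | Δ < x i}).indicator (fun _ => (1:ℝ)) := by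
  funext ω
  by_cases h : Δ < U ω i <;> simp [binVar, Set.indicator, h, Set.mem_preimage, Set.mem_setOf_eq]

/-- bridging function for a binary–binary pair,
`F_bb(ρ; Δⱼ, Δₖ) = 2(Φ₂(Δⱼ, Δₖ; ρ) − Φ(Δⱼ)Φ(Δₖ))` (Theorem 1). -/
theorem kendall_tau_binary_binary
    {Ω : Type*} [MeasurableSpace Ω] (μ : Measure Ω) [IsProbabilityMeasure μ]
    (ρ : ℝ) (hρ : ρ ∈ Set.Ioo (-1 : ℝ) 1) (Δj Δk : ℝ)
    (Z Z' : Ω → Fin 2 → ℝ) (hZm : Measurable Z) (hZ'm : Measurable Z')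
    (hZ : Measure.map Z μ = mvGauss (corrMat ρ))
    (hZ' : Measure.map Z' μ = mvGauss (corrMat ρ))
    (hind : IndepFun Z Z' μ) :
    ∫ ω, Real.sign ((binVar Δj (Z ω 0) - binVar Δj (Z' ω 0)) *
        (binVar Δk (Z ω 1) - binVar Δk (Z' ω 1))) ∂μ
      = 2 * (Phi2 (Δj : EReal) (Δk : EReal) ρ - stdPhi (Δj : EReal) * stdPhi (Δk : EReal)) := by
  set ν := mvGauss (corrMat ρ) with hν
  set Sj : Set (Fin 2 → ℝ) := {x | Δj < x 0} with hSjdef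
  set Sk : Set (Fin 2 → ℝ) := {x | Δk < x 1} with hSkdef
  have hSjm : MeasurableSet Sj := measurableSet_lt measurable_const (measurable_pi_apply 0)
  have hSkm : MeasurableSet Sk := measurableSet_lt measurable_const (measurable_pi_apply 1)
  -- ν is a probability measure
  have hνuniv : ν Set.univ = 1 := by
    have : (Set.univ : Set (Fin 2 → ℝ)) = {x | x 0 ∈ (Set.univ : Set ℝ)} := by
      ext x; simp
    rw [hν, this, mvGauss_fst ρ hρ]
    exact measure_univ
  haveI hνprob : IsProbabilityMeasure ν := ⟨hνuniv⟩
  -- step 1: remove the sign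
  have hsgn : ∀ ω, Real.sign ((binVar Δj (Z ω 0) - binVar Δj (Z' ω 0)) *
      (binVar Δk (Z ω 1) - binVar Δk (Z' ω 1)))
      = (binVar Δj (Z ω 0) - binVar Δj (Z' ω 0)) *
        (binVar Δk (Z ω 1) - binVar Δk (Z' ω 1)) := by
    intro ω
    unfold binVar
    split_ifs <;> norm_num [Real.sign]
  rw [integral_congr_ae (Filter.Eventually.of_forall hsgn)]
  -- measurability / integrability of the four products
  have hZZ : (fun ω => binVar Δj (Z ω 0) * binVar Δk (Z ω 1))
      = (Z ⁻¹' Sj ∩ Z ⁻¹' Sk).indicator (fun _ => (1:ℝ)) := prod_rep Δj Δk Z Z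
  have hZW : (fun ω => binVar Δj (Z ω 0) * binVar Δk (Z' ω 1))
      = (Z ⁻¹' Sj ∩ Z' ⁻¹' Sk).indicator (fun _ => (1:ℝ)) := prod_rep Δj Δk Z Z'
  have hWZ : (fun ω => binVar Δj (Z' ω 0) * binVar Δk (Z ω 1))
      = (Z' ⁻¹' Sj ∩ Z ⁻¹' Sk).indicator (fun _ => (1:ℝ)) := prod_rep Δj Δk Z' Z
  have hWW : (fun ω => binVar Δj (Z' ω 0) * binVar Δk (Z' ω 1))
      = (Z' ⁻¹' Sj ∩ Z' ⁻¹' Sk).indicator (fun _ => (1:ℝ)) := prod_rep Δj Δk Z' Z'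
  have hintZZ : Integrable (fun ω => binVar Δj (Z ω 0) * binVar Δk (Z ω 1)) μ := by
    rw [hZZ]; exact (integrable_const 1).indicator ((hZm hSjm).inter (hZm hSkm))
  have hintZW : Integrable (fun ω => binVar Δj (Z ω 0) * binVar Δk (Z' ω 1)) μ := by
    rw [hZW]; exact (integrable_const 1).indicator ((hZm hSjm).inter (hZ'm hSkm))
  have hintWZ : Integrable (fun ω => binVar Δj (Z' ω 0) * binVar Δk (Z ω 1)) μ := by
    rw [hWZ]; exact (integrable_const 1).indicator ((hZ'm hSjm).inter (hZm hSkm))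
  have hintWW : Integrable (fun ω => binVar Δj (Z' ω 0) * binVar Δk (Z' ω 1)) μ := by
    rw [hWW]; exact (integrable_const 1).indicator ((hZ'm hSjm).inter (hZ'm hSkm))
  -- expand the product
  have hexpand : ∫ ω, (binVar Δj (Z ω 0) - binVar Δj (Z' ω 0)) *
      (binVar Δk (Z ω 1) - binVar Δk (Z' ω 1)) ∂μ
      = (∫ ω, binVar Δj (Z ω 0) * binVar Δk (Z ω 1) ∂μ)
        - (∫ ω, binVar Δj (Z ω 0) * binVar Δk (Z' ω 1) ∂μ)
        - (∫ ω, binVar Δj (Z' ω 0) * binVar Δk (Z ω 1) ∂μ)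
        + (∫ ω, binVar Δj (Z' ω 0) * binVar Δk (Z' ω 1) ∂μ) := by
    have hpt : (fun ω => (binVar Δj (Z ω 0) - binVar Δj (Z' ω 0)) *
        (binVar Δk (Z ω 1) - binVar Δk (Z' ω 1)))
        = fun ω => binVar Δj (Z ω 0) * binVar Δk (Z ω 1)
            - binVar Δj (Z ω 0) * binVar Δk (Z' ω 1)
            - binVar Δj (Z' ω 0) * binVar Δk (Z ω 1)
            + binVar Δj (Z' ω 0) * binVar Δk (Z' ω 1) := by
      funext ω; ring
    have e3 := integral_add ((hintZZ.sub hintZW).sub hintWZ) hintWW (μ := μ)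
    have e2 := integral_sub (hintZZ.sub hintZW) hintWZ (μ := μ)
    have e1 := integral_sub hintZZ hintZW (μ := μ)
    simp only [Pi.sub_apply] at e3 e2
    rw [hpt, e3, e2, e1]
  rw [hexpand]
  -- values of same-copy terms
  have hmapZ : ∀ s : Set (Fin 2 → ℝ), MeasurableSet s → μ (Z ⁻¹' s) = ν s := by
    intro s hs
    rw [← Measure.map_apply hZm hs, hZ]
  have hmapW : ∀ s : Set (Fin 2 → ℝ), MeasurableSet s → μ (Z' ⁻¹' s) = ν s := by
    intro s hs
    rw [← Measure.map_apply hZ'm hs, hZ']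
  have hvalZZ : ∫ ω, binVar Δj (Z ω 0) * binVar Δk (Z ω 1) ∂μ = (ν (Sj ∩ Sk)).toReal := by
    rw [hZZ, ← Set.preimage_inter, integral_ind μ (hZm (hSjm.inter hSkm)),
      hmapZ _ (hSjm.inter hSkm)]
  have hvalWW : ∫ ω, binVar Δj (Z' ω 0) * binVar Δk (Z' ω 1) ∂μ = (ν (Sj ∩ Sk)).toReal := by
    rw [hWW, ← Set.preimage_inter, integral_ind μ (hZ'm (hSjm.inter hSkm)),
      hmapW _ (hSjm.inter hSkm)]
  -- single expectations
  have hvalZj : ∫ ω, binVar Δj (Z ω 0) ∂μ = (ν Sj).toReal := by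
    rw [bin_rep Δj 0 Z, integral_ind μ (hZm hSjm), hmapZ _ hSjm]
  have hvalZk : ∫ ω, binVar Δk (Z ω 1) ∂μ = (ν Sk).toReal := by
    rw [bin_rep Δk 1 Z, integral_ind μ (hZm hSkm), hmapZ _ hSkm]
  have hvalWj : ∫ ω, binVar Δj (Z' ω 0) ∂μ = (ν Sj).toReal := by
    rw [bin_rep Δj 0 Z', integral_ind μ (hZ'm hSjm), hmapW _ hSjm]
  have hvalWk : ∫ ω, binVar Δk (Z' ω 1) ∂μ = (ν Sk).toReal := by
    rw [bin_rep Δk 1 Z', integral_ind μ (hZ'm hSkm), hmapW _ hSkm]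
  -- cross terms factor by independence
  have hindZW : IndepFun (fun ω => binVar Δj (Z ω 0)) (fun ω => binVar Δk (Z' ω 1)) μ :=
    hind.comp (binVar_measurable Δj 0) (binVar_measurable Δk 1)
  have hindWZ : IndepFun (fun ω => binVar Δj (Z' ω 0)) (fun ω => binVar Δk (Z ω 1)) μ :=
    hind.symm.comp (binVar_measurable Δj 0) (binVar_measurable Δk 1)
  have haesZj : AEStronglyMeasurable (fun ω => binVar Δj (Z ω 0)) μ :=
    ((binVar_measurable Δj 0).comp hZm).aestronglyMeasurable
  have haesZk : AEStronglyMeasurable (fun ω => binVar Δk (Z ω 1)) μ :=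
    ((binVar_measurable Δk 1).comp hZm).aestronglyMeasurable
  have haesWj : AEStronglyMeasurable (fun ω => binVar Δj (Z' ω 0)) μ :=
    ((binVar_measurable Δj 0).comp hZ'm).aestronglyMeasurable
  have haesWk : AEStronglyMeasurable (fun ω => binVar Δk (Z' ω 1)) μ :=
    ((binVar_measurable Δk 1).comp hZ'm).aestronglyMeasurable
  have hvalZW : ∫ ω, binVar Δj (Z ω 0) * binVar Δk (Z' ω 1) ∂μ
      = (ν Sj).toReal * (ν Sk).toReal := by
    have := hindZW.integral_mul_eq_mul_integral haesZj haesWk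
    simpa [Pi.mul_apply, hvalZj, hvalWk] using this
  have hvalWZ : ∫ ω, binVar Δj (Z' ω 0) * binVar Δk (Z ω 1) ∂μ
      = (ν Sj).toReal * (ν Sk).toReal := by
    have := hindWZ.integral_mul_eq_mul_integral haesWj haesZk
    simpa [Pi.mul_apply, hvalWj, hvalZk] using this
  rw [hvalZZ, hvalWW, hvalZW, hvalWZ]
  -- identify the complements with the CDFs
  have hcj : (ν Sjᶜ).toReal = stdPhi (Δj : EReal) := by
    have h1 : Sjᶜ = {x : Fin 2 → ℝ | x 0 ∈ Set.Iic Δj} := by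
      ext x; simp [hSjdef, not_lt]
    have h2 : {x : ℝ | (x : EReal) ≤ (Δj : EReal)} = Set.Iic Δj := by
      ext x; simp [EReal.coe_le_coe_iff]
    rw [h1, hν, mvGauss_fst ρ hρ, stdPhi, h2]
  have hck : (ν Skᶜ).toReal = stdPhi (Δk : EReal) := by
    have h1 : Skᶜ = {x : Fin 2 → ℝ | x 1 ∈ Set.Iic Δk} := by
      ext x; simp [hSkdef, not_lt]
    have h2 : {x : ℝ | (x : EReal) ≤ (Δk : EReal)} = Set.Iic Δk := by
      ext x; simp [EReal.coe_le_coe_iff]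
    rw [h1, hν, mvGauss_snd ρ hρ, stdPhi, h2]
  have hcp : (ν (Sjᶜ ∩ Skᶜ)).toReal = Phi2 (Δj : EReal) (Δk : EReal) ρ := by
    have h1 : Sjᶜ ∩ Skᶜ
        = {x : Fin 2 → ℝ | ∀ i, (x i : EReal) ≤ (![(Δj : EReal), (Δk : EReal)]) i} := by
      ext x
      rw [Set.mem_inter_iff, Set.mem_compl_iff, Set.mem_compl_iff]
      simp only [hSjdef, hSkdef, Set.mem_setOf_eq, not_lt, Fin.forall_fin_two,
        Matrix.cons_val_zero, Matrix.cons_val_one, Matrix.head_cons, EReal.coe_le_coe_iff]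
    rw [Phi2, PhiVec, ← hν, ← h1]
  -- linear relations among the probabilities
  have hA : ν (Sj ∩ Sk) + ν (Sjᶜ ∪ Skᶜ) = 1 := by
    rw [← Set.compl_inter]
    exact (measure_add_measure_compl (hSjm.inter hSkm)).trans measure_univ
  have hB : ν (Sjᶜ ∪ Skᶜ) + ν (Sjᶜ ∩ Skᶜ) = ν Sjᶜ + ν Skᶜ :=
    measure_union_add_inter _ hSkm.compl
  have hCj : ν Sj + ν Sjᶜ = 1 := (measure_add_measure_compl hSjm).trans measure_univ
  have hCk : ν Sk + ν Skᶜ = 1 := (measure_add_measure_compl hSkm).trans measure_univ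
  have tA := congrArg ENNReal.toReal hA
  have tB := congrArg ENNReal.toReal hB
  have tCj := congrArg ENNReal.toReal hCj
  have tCk := congrArg ENNReal.toReal hCk
  rw [ENNReal.toReal_add (measure_ne_top ν _) (measure_ne_top ν _), ENNReal.toReal_one] at tA tCj tCk
  rw [ENNReal.toReal_add (measure_ne_top ν _) (measure_ne_top ν _),
    ENNReal.toReal_add (measure_ne_top ν _) (measure_ne_top ν _)] at tB
  rw [hcj] at tCj
  rw [hck] at tCk
  rw [hcj, hck, hcp] at tB
  have hq : (ν (Sj ∩ Sk)).toReal
      = 1 - stdPhi (Δj : EReal) - stdPhi (Δk : EReal) + Phi2 (Δj : EReal) (Δk : EReal) ρ := by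
    linarith
  have hqj : (ν Sj).toReal = 1 - stdPhi (Δj : EReal) := by linarith
  have hqk : (ν Sk).toReal = 1 - stdPhi (Δk : EReal) := by linarith
  rw [hq, hqj, hqk]
  ring
end
end

section
/- Let (Z_j, Z_k) be a centered bivariate Gaussian vector with unit variances and correlation ρ ∈ (−1, 1). Define the binary variable X_j = 1{Z_j > Δ_j} for a cutoff Δ_j ∈ ℝ and keep X_k = Z_k continuous. Then the population Kendall's tau of (X_j, Z_k) equals 4·Φ_2(Δ_j, 0; ρ/√2) − 2·Φ(Δ_j). (Bridging function for a continuous–binary pair, F_cb, from Theorem 1.) -/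
open MeasureTheory ProbabilityTheory Real Matrix

noncomputable section

open scoped NNReal ENNReal


lemma sqrt_inv_mul_sqrt_inv (a b : ℝ) (ha : 0 ≤ a) :
    (Real.sqrt a)⁻¹ * (Real.sqrt b)⁻¹ = (Real.sqrt (a * b))⁻¹ := by
  rw [Real.sqrt_mul ha, mul_inv]

/-- Key scalar Gaussian algebra: product of a standard normal pdf and a conditional pdf. -/
lemma conv_pdf_real (c m t : ℝ) {v : ℝ} (hv : 0 < v) (x : ℝ) :
    ((Real.sqrt (2 * π * 1))⁻¹ * rexp (- (x - 0)^2 / (2 * 1))) *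
      ((Real.sqrt (2 * π * v))⁻¹ * rexp (- (t - (c * x + m))^2 / (2 * v)))
    = ((Real.sqrt (2 * π * (v + c^2)))⁻¹ *
        rexp (- (t - m)^2 / (2 * (v + c^2)))) *
      ((Real.sqrt (2 * π * (v / (v + c^2))))⁻¹ *
        rexp (- (x - c * (t - m) / (v + c^2))^2 / (2 * (v / (v + c^2))))) := by
  have hw : 0 < v + c^2 := by positivity
  have h2π : (0:ℝ) ≤ 2 * π := by positivity
  rw [mul_mul_mul_comm, mul_mul_mul_comm ((Real.sqrt (2 * π * (v + c^2)))⁻¹)]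
  congr 1
  · rw [sqrt_inv_mul_sqrt_inv _ _ (by positivity), sqrt_inv_mul_sqrt_inv _ _ (by positivity)]
    congr 2
    field_simp
  · rw [← Real.exp_add, ← Real.exp_add]
    congr 1
    field_simp
    ring



def sqNN (c : ℝ) : ℝ≥0 := ⟨c^2, sq_nonneg c⟩

@[simp] lemma sqNN_coe (c : ℝ) : ((sqNN c : ℝ≥0) : ℝ) = c^2 := rfl

lemma conv_gaussianPDFReal (c m t : ℝ) (v : ℝ≥0) (hv : v ≠ 0) (x : ℝ) :
    gaussianPDFReal 0 1 x * gaussianPDFReal (c * x + m) v t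
    = gaussianPDFReal m (v + sqNN c) t *
      gaussianPDFReal (c * (t - m) / (v + c^2)) (v / (v + sqNN c)) x := by
  have hv' : (0:ℝ) < v := lt_of_le_of_ne v.coe_nonneg (by exact_mod_cast hv.symm)
  simp only [gaussianPDFReal, NNReal.coe_add, NNReal.coe_div, sqNN_coe, NNReal.coe_one]
  exact conv_pdf_real c m t hv' x



lemma measurable_gaussianPDF_comp {α : Type*} [MeasurableSpace α] {g h : α → ℝ}
    (hg : Measurable g) (hh : Measurable h) (v : ℝ≥0) :
    Measurable (fun a => gaussianPDF (g a) v (h a)) := by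
  unfold gaussianPDF gaussianPDFReal
  fun_prop

lemma measurable_gaussianPDF_pair (c m : ℝ) (v : ℝ≥0) :
    Measurable (fun p : ℝ × ℝ => gaussianPDF (c * p.1 + m) v p.2) :=
  measurable_gaussianPDF_comp (by fun_prop) measurable_snd v

lemma measurable_section_gauss (c m : ℝ) (v : ℝ≥0) {B : Set ℝ} (hB : MeasurableSet B) :
    Measurable (fun x : ℝ => ∫⁻ t in B, gaussianPDF (c * x + m) v t ∂volume) := by
  have h1 : ∀ x, (∫⁻ t in B, gaussianPDF (c * x + m) v t ∂volume)
      = ∫⁻ t, gaussianPDF (c * x + m) v t * B.indicator 1 t ∂volume := by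
    intro x
    rw [← lintegral_indicator hB]
    congr 1
    ext t
    by_cases ht : t ∈ B <;> simp [Set.indicator, ht]
  simp_rw [h1]
  exact Measurable.lintegral_prod_right
    (f := fun x t => gaussianPDF (c * x + m) v t * B.indicator 1 t)
    ((measurable_gaussianPDF_pair c m v).mul
      ((measurable_const.indicator hB).comp measurable_snd))



lemma gaussianReal_apply_set (m : ℝ) {v : ℝ≥0} (hv : v ≠ 0) {B : Set ℝ}
    (hB : MeasurableSet B) :
    gaussianReal m v B = ∫⁻ t in B, gaussianPDF m v t ∂volume := by
  rw [gaussianReal_of_var_ne_zero _ hv, withDensity_apply _ hB]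

/-- Gaussian mixture of Gaussians with affine mean is Gaussian. -/
lemma lintegral_gaussianReal_affine (c m : ℝ) {v : ℝ≥0} (hv : v ≠ 0) {B : Set ℝ}
    (hB : MeasurableSet B) :
    ∫⁻ x, gaussianReal (c * x + m) v B ∂(gaussianReal 0 1)
      = gaussianReal m (v + sqNN c) B := by
  have hv' : (0:ℝ) < v := lt_of_le_of_ne v.coe_nonneg (by exact_mod_cast hv.symm)
  have hw : v + sqNN c ≠ 0 := by
    intro h
    exact hv (by simpa using (add_eq_zero.mp h).1)
  have hvw : v / (v + sqNN c) ≠ 0 := by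
    rw [ne_eq, div_eq_zero_iff]
    push_neg
    exact ⟨hv, fun h => hw h⟩
  simp_rw [gaussianReal_apply_set _ hv hB]
  rw [gaussianReal_of_var_ne_zero 0 one_ne_zero,
    lintegral_withDensity_eq_lintegral_mul _ (measurable_gaussianPDF 0 1)
      (measurable_section_gauss c m v hB)]
  simp only [Pi.mul_apply]
  have e1 : ∀ x, gaussianPDF 0 1 x * ∫⁻ t in B, gaussianPDF (c * x + m) v t ∂volume
      = ∫⁻ t in B, gaussianPDF 0 1 x * gaussianPDF (c * x + m) v t ∂volume := by
    intro x
    exact (lintegral_const_mul _ ((measurable_gaussianPDF_pair c m v).comp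
      (measurable_const.prodMk measurable_id))).symm
  simp_rw [e1]
  rw [lintegral_lintegral_swap]
  swap
  · exact (((measurable_gaussianPDF 0 1).comp measurable_fst).mul
      ((measurable_gaussianPDF_pair c m v))).aemeasurable
  have hpoint : ∀ t, ∫⁻ x, gaussianPDF 0 1 x * gaussianPDF (c * x + m) v t ∂volume
      = gaussianPDF m (v + sqNN c) t := by
    intro t
    have : ∀ x, gaussianPDF 0 1 x * gaussianPDF (c * x + m) v t
        = gaussianPDF m (v + sqNN c) t *
          gaussianPDF (c * (t - m) / (v + c^2)) (v / (v + sqNN c)) x := by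
      intro x
      unfold gaussianPDF
      rw [← ENNReal.ofReal_mul (gaussianPDFReal_nonneg _ _ _),
        ← ENNReal.ofReal_mul (gaussianPDFReal_nonneg _ _ _),
        conv_gaussianPDFReal c m t v hv x]
    simp_rw [this]
    rw [lintegral_const_mul _ (measurable_gaussianPDF _ _),
      lintegral_gaussianPDF_eq_one _ hvw, mul_one]
  simp_rw [hpoint]
  rw [← gaussianReal_apply_set m hw hB]



lemma corrMat_det {ρ : ℝ} : (corrMat ρ).det = 1 - ρ^2 := by
  simp [corrMat, Matrix.det_fin_two_of]
  ring

lemma corrMat_quad {ρ : ℝ} (h : 1 - ρ^2 ≠ 0) (z : Fin 2 → ℝ) :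
    z ⬝ᵥ (corrMat ρ)⁻¹ *ᵥ z
      = (z 0 ^ 2 - 2 * ρ * z 0 * z 1 + z 1 ^ 2) / (1 - ρ^2) := by
  rw [Matrix.inv_def, corrMat_det]
  rw [show (corrMat ρ).adjugate = !![1, -ρ; -ρ, 1] by
    rw [corrMat, Matrix.adjugate_fin_two]
    simp]
  simp [dotProduct, mulVec, Fin.sum_univ_two, Ring.inverse_eq_inv']
  field_simp
  ring

lemma mvGaussPDF_factor {ρ : ℝ} (hρ : -1 < ρ) (hρ' : ρ < 1) (z : Fin 2 → ℝ) :
    mvGaussPDF (corrMat ρ) z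
      = gaussianPDFReal 0 1 (z 0) *
        gaussianPDFReal (ρ * z 0) ((1 - ρ^2).toNNReal) (z 1) := by
  have hv : (0:ℝ) < 1 - ρ^2 := by nlinarith
  have hcoe : (((1 - ρ^2).toNNReal : ℝ≥0) : ℝ) = 1 - ρ^2 := Real.coe_toNNReal _ hv.le
  rw [mvGaussPDF, corrMat_det, corrMat_quad hv.ne', gaussianPDFReal, gaussianPDFReal, hcoe]
  rw [mul_mul_mul_comm, sqrt_inv_mul_sqrt_inv _ _ (by positivity), ← Real.exp_add]
  congr 2
  · congr 1
    push_cast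
    ring
  · field_simp
    push_cast
    ring



lemma lintegral_mvGauss {ρ : ℝ} (hρ : -1 < ρ) (hρ' : ρ < 1)
    (f : ℝ × ℝ → ℝ≥0∞) (hf : Measurable f) :
    ∫⁻ z, f (z 0, z 1) ∂(mvGauss (corrMat ρ))
      = ∫⁻ x, (∫⁻ y, f (x, y) * gaussianPDF (ρ * x) ((1 - ρ^2).toNNReal) y ∂volume)
          ∂(gaussianReal 0 1) := by
  set v : ℝ≥0 := (1 - ρ^2).toNNReal with hv
  have hdens : mvGauss (corrMat ρ) = volume.withDensity
      (fun z => gaussianPDF 0 1 (z 0) * gaussianPDF (ρ * z 0) v (z 1)) := by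
    rw [mvGauss]
    congr 1
    ext z
    rw [mvGaussPDF_factor hρ hρ', gaussianPDF, gaussianPDF,
      ENNReal.ofReal_mul (gaussianPDFReal_nonneg _ _ _)]
  have hmz : Measurable (fun z : Fin 2 → ℝ =>
      gaussianPDF 0 1 (z 0) * gaussianPDF (ρ * z 0) v (z 1)) := by
    exact ((measurable_gaussianPDF 0 1).comp (measurable_pi_apply 0)).mul
      (measurable_gaussianPDF_comp (by fun_prop) (measurable_pi_apply 1) v)
  have hfz : Measurable fun z : Fin 2 → ℝ => f (z 0, z 1) :=
    hf.comp ((measurable_pi_apply 0).prodMk (measurable_pi_apply 1))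
  rw [hdens, lintegral_withDensity_eq_lintegral_mul _ hmz hfz]
  have hg : Measurable (fun p : ℝ × ℝ =>
      gaussianPDF 0 1 p.1 * gaussianPDF (ρ * p.1) v p.2 * f p) := by
    exact (((measurable_gaussianPDF 0 1).comp measurable_fst).mul
      (measurable_gaussianPDF_comp (by fun_prop) measurable_snd v)).mul hf
  have htrans : ∫⁻ z : Fin 2 → ℝ,
        gaussianPDF 0 1 (z 0) * gaussianPDF (ρ * z 0) v (z 1) * f (z 0, z 1) ∂volume
      = ∫⁻ p : ℝ × ℝ, gaussianPDF 0 1 p.1 * gaussianPDF (ρ * p.1) v p.2 * f p ∂volume := by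
    rw [← (volume_preserving_finTwoArrow ℝ).lintegral_comp hg]
    simp [MeasurableEquiv.finTwoArrow_apply]
  simp only [Pi.mul_apply]
  rw [htrans, Measure.volume_eq_prod, lintegral_prod _ hg.aemeasurable]
  rw [gaussianReal_of_var_ne_zero 0 one_ne_zero,
    lintegral_withDensity_eq_lintegral_mul _ (measurable_gaussianPDF 0 1)
      (Measurable.lintegral_prod_right (f := fun x y => f (x, y) * gaussianPDF (ρ * x) v y)
        (hf.mul (measurable_gaussianPDF_comp (by fun_prop) measurable_snd v)))]
  congr 1
  ext x
  simp only [Pi.mul_apply]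
  rw [← lintegral_const_mul _ (by
    exact (hf.comp (measurable_const.prodMk measurable_id)).mul
      ((measurable_gaussianPDF _ _)))]
  congr 1
  ext y
  ring



lemma gaussianReal_Iic_shift (m w : ℝ) (v : ℝ≥0) :
    gaussianReal m v (Set.Iic w) = gaussianReal (m - w) v (Set.Iic 0) := by
  have h := gaussianReal_map_add_const (μ := m - w) (v := v) w
  rw [sub_add_cancel] at h
  rw [← h, Measure.map_apply (by fun_prop) measurableSet_Iic]
  congr 1
  ext y
  simp

lemma sqNN_neg_one : sqNN (-1 : ℝ) = 1 := by
  ext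
  simp [sqNN]
  rfl

lemma K_lemma (a : ℝ) {v : ℝ≥0} (hv : v ≠ 0) :
    ∫⁻ y, (gaussianReal 0 1) (Set.Ici y) * gaussianPDF a v y ∂volume
      = gaussianReal a (v + 1) (Set.Iic 0) := by
  have h1 : ∀ y : ℝ, (gaussianReal 0 1) (Set.Ici y) * gaussianPDF a v y
      = ∫⁻ w, {p : ℝ × ℝ | p.1 ≤ p.2}.indicator 1 (y, w) * gaussianPDF 0 1 w
          * gaussianPDF a v y ∂volume := by
    intro y
    rw [gaussianReal_apply_set 0 one_ne_zero measurableSet_Ici,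
      ← lintegral_indicator measurableSet_Ici]
    rw [← lintegral_mul_const _ ((measurable_gaussianPDF 0 1).indicator measurableSet_Ici)]
    congr 1
    ext w
    by_cases hw : y ≤ w <;>
      simp [Set.indicator, hw]
  simp_rw [h1]
  rw [lintegral_lintegral_swap]
  swap
  · apply Measurable.aemeasurable
    apply Measurable.mul
    apply Measurable.mul
    · exact (measurable_const.indicator
        (measurableSet_le measurable_fst measurable_snd)).comp
        (measurable_fst.prodMk measurable_snd)
    · exact (measurable_gaussianPDF 0 1).comp measurable_snd
    · exact (measurable_gaussianPDF a v).comp measurable_fst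
  have h2 : ∀ w : ℝ, ∫⁻ y, {p : ℝ × ℝ | p.1 ≤ p.2}.indicator 1 (y, w) * gaussianPDF 0 1 w
        * gaussianPDF a v y ∂volume
      = gaussianPDF 0 1 w * gaussianReal ((-1) * w + a) v (Set.Iic 0) := by
    intro w
    rw [gaussianReal_Iic_shift ((-1) * w + a) 0 v]
    have : (-1) * w + a - 0 = a - w := by ring
    rw [this, ← gaussianReal_Iic_shift a w v,
      gaussianReal_apply_set a hv measurableSet_Iic, ← lintegral_indicator measurableSet_Iic,
      ← lintegral_const_mul _ ((measurable_gaussianPDF a v).indicator measurableSet_Iic)]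
    congr 1
    ext y
    by_cases hy : y ≤ w <;>
      simp [Set.indicator, hy, mul_comm]
  simp_rw [h2]
  have h3 : ∫⁻ w, gaussianPDF 0 1 w * gaussianReal ((-1) * w + a) v (Set.Iic 0) ∂volume
      = ∫⁻ w, gaussianReal ((-1) * w + a) v (Set.Iic 0) ∂(gaussianReal 0 1) := by
    rw [gaussianReal_of_var_ne_zero 0 one_ne_zero,
      lintegral_withDensity_eq_lintegral_mul _ (measurable_gaussianPDF 0 1)]
    · rfl
    · have : (fun w : ℝ => gaussianReal ((-1) * w + a) v (Set.Iic 0))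
          = fun w => gaussianReal a v (Set.Iic w) := by
        ext w
        rw [gaussianReal_Iic_shift a w v, gaussianReal_Iic_shift ((-1) * w + a) 0 v]
        norm_num
        rw [show -w + a = a - w by ring]
      rw [this]
      exact Monotone.measurable (fun w₁ w₂ h => measure_mono (Set.Iic_subset_Iic.mpr h))
  rw [h3, lintegral_gaussianReal_affine (-1) a hv measurableSet_Iic, sqNN_neg_one]



lemma rescale_gauss (ρ x : ℝ) (hρ : -1 < ρ) (hρ' : ρ < 1) :
    gaussianReal (ρ * x) ((1 - ρ^2).toNNReal + 1) (Set.Iic 0)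
      = gaussianReal ((ρ / Real.sqrt 2) * x) ((1 - (ρ / Real.sqrt 2)^2).toNNReal)
          (Set.Iic 0) := by
  have h2 : (0:ℝ) < Real.sqrt 2 := Real.sqrt_pos.mpr (by norm_num)
  have hsq : (Real.sqrt 2)^2 = 2 := Real.sq_sqrt (by norm_num)
  have hv : (0:ℝ) ≤ 1 - ρ^2 := by nlinarith
  have hmap := gaussianReal_map_const_mul (μ := ρ * x) (v := (1 - ρ^2).toNNReal + 1)
    ((Real.sqrt 2)⁻¹)
  have happ := congrArg (fun m : Measure ℝ => m (Set.Iic 0)) hmap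
  rw [Measure.map_apply (by fun_prop) measurableSet_Iic] at happ
  have hpre : ((Real.sqrt 2)⁻¹ * ·) ⁻¹' (Set.Iic (0:ℝ)) = Set.Iic 0 := by
    ext y
    simp only [Set.mem_preimage, Set.mem_Iic]
    constructor
    · intro h
      nlinarith [inv_pos.mpr h2]
    · intro h
      exact mul_nonpos_of_nonneg_of_nonpos (inv_pos.mpr h2).le h
  rw [hpre] at happ
  rw [happ]
  have hvar : (NNReal.mk ((Real.sqrt 2)⁻¹ ^ 2) (sq_nonneg _) * ((1 - ρ^2).toNNReal + 1) : ℝ≥0)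
      = (1 - (ρ / Real.sqrt 2)^2).toNNReal := by
    apply NNReal.coe_injective
    push_cast
    rw [Real.coe_toNNReal _ hv, Real.coe_toNNReal]
    · rw [div_pow, hsq]
      field_simp
      rw [hsq]
      ring
    · rw [div_pow, hsq]
      nlinarith
  have hmean : (Real.sqrt 2)⁻¹ * (ρ * x) = (ρ / Real.sqrt 2) * x := by ring
  rw [hmean, hvar]



lemma vnn_ne_zero {ρ : ℝ} (hρ : -1 < ρ) (hρ' : ρ < 1) : (1 - ρ^2).toNNReal ≠ 0 := by
  simp only [ne_eq, Real.toNNReal_eq_zero, not_le]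
  nlinarith

lemma lintegral_gaussianReal_mul (c : ℝ) {v : ℝ≥0} (hv : v ≠ 0) {B : Set ℝ}
    (hB : MeasurableSet B) :
    ∫⁻ x, gaussianReal (c * x) v B ∂(gaussianReal 0 1)
      = gaussianReal 0 (v + sqNN c) B := by
  have h := lintegral_gaussianReal_affine c 0 hv hB
  simpa using h

lemma mvGauss_fst_Iic {ρ : ℝ} (hρ : -1 < ρ) (hρ' : ρ < 1) (Δ : ℝ) :
    mvGauss (corrMat ρ) {z : Fin 2 → ℝ | z 0 ≤ Δ} = gaussianReal 0 1 (Set.Iic Δ) := by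
  have hf : Measurable (fun p : ℝ × ℝ => (Set.Iic Δ).indicator (1 : ℝ → ℝ≥0∞) p.1) :=
    (measurable_const.indicator measurableSet_Iic).comp measurable_fst
  have h := lintegral_mvGauss hρ hρ' _ hf
  have hL : ∫⁻ z : Fin 2 → ℝ, (Set.Iic Δ).indicator (1 : ℝ → ℝ≥0∞) (z 0)
        ∂(mvGauss (corrMat ρ))
      = mvGauss (corrMat ρ) {z : Fin 2 → ℝ | z 0 ≤ Δ} := by
    have : (fun z : Fin 2 → ℝ => (Set.Iic Δ).indicator (1 : ℝ → ℝ≥0∞) (z 0))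
        = {z : Fin 2 → ℝ | z 0 ≤ Δ}.indicator 1 := by
      ext z
      by_cases hz : z 0 ≤ Δ <;> simp [Set.indicator, hz]
    rw [this, lintegral_indicator_one (measurableSet_le (measurable_pi_apply 0)
      measurable_const)]
  have hR : ∫⁻ x, (∫⁻ y, (Set.Iic Δ).indicator (1 : ℝ → ℝ≥0∞) x
        * gaussianPDF (ρ * x) ((1 - ρ^2).toNNReal) y ∂volume) ∂(gaussianReal 0 1)
      = gaussianReal 0 1 (Set.Iic Δ) := by
    have : ∀ x : ℝ, (∫⁻ y, (Set.Iic Δ).indicator (1 : ℝ → ℝ≥0∞) x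
        * gaussianPDF (ρ * x) ((1 - ρ^2).toNNReal) y ∂volume)
        = (Set.Iic Δ).indicator (1 : ℝ → ℝ≥0∞) x := by
      intro x
      rw [lintegral_const_mul _ (measurable_gaussianPDF _ _),
        lintegral_gaussianPDF_eq_one _ (vnn_ne_zero hρ hρ'), mul_one]
    simp_rw [this]
    rw [lintegral_indicator_one measurableSet_Iic]
  rw [← hL, h, hR]

lemma mvGauss_snd_s2 {ρ : ℝ} (hρ : -1 < ρ) (hρ' : ρ < 1) {B : Set ℝ} (hB : MeasurableSet B) :
    mvGauss (corrMat ρ) {z : Fin 2 → ℝ | z 1 ∈ B} = gaussianReal 0 1 B := by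
  have hf : Measurable (fun p : ℝ × ℝ => B.indicator (1 : ℝ → ℝ≥0∞) p.2) :=
    (measurable_const.indicator hB).comp measurable_snd
  have h := lintegral_mvGauss hρ hρ' _ hf
  have hL : ∫⁻ z : Fin 2 → ℝ, B.indicator (1 : ℝ → ℝ≥0∞) (z 1) ∂(mvGauss (corrMat ρ))
      = mvGauss (corrMat ρ) {z : Fin 2 → ℝ | z 1 ∈ B} := by
    have : (fun z : Fin 2 → ℝ => B.indicator (1 : ℝ → ℝ≥0∞) (z 1))
        = {z : Fin 2 → ℝ | z 1 ∈ B}.indicator 1 := by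
      ext z
      by_cases hz : z 1 ∈ B <;> simp [Set.indicator, hz]
    rw [this]
    exact lintegral_indicator_one (measurable_pi_apply 1 hB)
  have hR : ∫⁻ x, (∫⁻ y, B.indicator (1 : ℝ → ℝ≥0∞) y
        * gaussianPDF (ρ * x) ((1 - ρ^2).toNNReal) y ∂volume) ∂(gaussianReal 0 1)
      = gaussianReal 0 1 B := by
    have h1 : ∀ x : ℝ, (∫⁻ y, B.indicator (1 : ℝ → ℝ≥0∞) y
        * gaussianPDF (ρ * x) ((1 - ρ^2).toNNReal) y ∂volume)
        = gaussianReal (ρ * x) ((1 - ρ^2).toNNReal) B := by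
      intro x
      rw [gaussianReal_apply_set _ (vnn_ne_zero hρ hρ') hB, ← lintegral_indicator hB]
      congr 1
      ext y
      by_cases hy : y ∈ B <;> simp [Set.indicator, hy]
    simp_rw [h1]
    rw [lintegral_gaussianReal_mul ρ (vnn_ne_zero hρ hρ') hB]
    have : ((1 - ρ^2).toNNReal + sqNN ρ : ℝ≥0) = 1 := by
      apply NNReal.coe_injective
      push_cast
      rw [Real.coe_toNNReal _ (by nlinarith : (0:ℝ) ≤ 1 - ρ^2), sqNN_coe]
      ring
    rw [this]
  rw [← hL, h, hR]



lemma measurable_gauss_Ici : Measurable (fun y : ℝ => gaussianReal 0 1 (Set.Ici y)) :=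
  Antitone.measurable (fun y₁ y₂ h => measure_mono (Set.Ici_subset_Ici.mpr h))

lemma r_mem {ρ : ℝ} (hρ : -1 < ρ) (hρ' : ρ < 1) :
    -1 < ρ / Real.sqrt 2 ∧ ρ / Real.sqrt 2 < 1 := by
  have h2 : (1:ℝ) < Real.sqrt 2 := by
    nlinarith [Real.sq_sqrt (by norm_num : (0:ℝ) ≤ 2), Real.sqrt_nonneg 2]
  constructor
  · rw [lt_div_iff₀ (by linarith)]
    nlinarith
  · rw [div_lt_one (by linarith)]
    nlinarith

lemma mvGauss_R {ρ : ℝ} (hρ : -1 < ρ) (hρ' : ρ < 1) (Δ : ℝ) :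
    ∫⁻ z : Fin 2 → ℝ, (Set.Iic Δ).indicator (1 : ℝ → ℝ≥0∞) (z 0)
        * (gaussianReal 0 1) (Set.Ici (z 1)) ∂(mvGauss (corrMat ρ))
      = mvGauss (corrMat (ρ / Real.sqrt 2)) {z : Fin 2 → ℝ | z 0 ≤ Δ ∧ z 1 ≤ 0} := by
  obtain ⟨hr, hr'⟩ := r_mem hρ hρ'
  set r := ρ / Real.sqrt 2 with hrdef
  have hf : Measurable (fun p : ℝ × ℝ => (Set.Iic Δ).indicator (1 : ℝ → ℝ≥0∞) p.1
      * gaussianReal 0 1 (Set.Ici p.2)) :=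
    ((measurable_const.indicator measurableSet_Iic).comp measurable_fst).mul
      (measurable_gauss_Ici.comp measurable_snd)
  have h := lintegral_mvGauss hρ hρ' _ hf
  rw [h]
  have hg : Measurable (fun p : ℝ × ℝ => (Set.Iic Δ).indicator (1 : ℝ → ℝ≥0∞) p.1
      * (Set.Iic (0:ℝ)).indicator (1 : ℝ → ℝ≥0∞) p.2) :=
    ((measurable_const.indicator measurableSet_Iic).comp measurable_fst).mul
      ((measurable_const.indicator measurableSet_Iic).comp measurable_snd)
  have h2 := lintegral_mvGauss hr hr' _ hg
  have hset : ∫⁻ z : Fin 2 → ℝ, (Set.Iic Δ).indicator (1 : ℝ → ℝ≥0∞) (z 0)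
        * (Set.Iic (0:ℝ)).indicator (1 : ℝ → ℝ≥0∞) (z 1) ∂(mvGauss (corrMat r))
      = mvGauss (corrMat r) {z : Fin 2 → ℝ | z 0 ≤ Δ ∧ z 1 ≤ 0} := by
    have he : (fun z : Fin 2 → ℝ => (Set.Iic Δ).indicator (1 : ℝ → ℝ≥0∞) (z 0)
        * (Set.Iic (0:ℝ)).indicator (1 : ℝ → ℝ≥0∞) (z 1))
        = {z : Fin 2 → ℝ | z 0 ≤ Δ ∧ z 1 ≤ 0}.indicator 1 := by
      ext z
      by_cases h0 : z 0 ≤ Δ <;> by_cases h1 : z 1 ≤ 0 <;>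
        simp [Set.indicator, h0, h1]
    rw [he]
    exact lintegral_indicator_one
      ((measurableSet_le (measurable_pi_apply 0) measurable_const).inter
        (measurableSet_le (measurable_pi_apply 1) measurable_const))
  rw [← hset, h2]
  congr 1
  ext x
  have hinner : ∀ B : Set ℝ, MeasurableSet B →
      ∫⁻ y, B.indicator (1 : ℝ → ℝ≥0∞) y
        * gaussianPDF (r * x) ((1 - r^2).toNNReal) y ∂volume
      = gaussianReal (r * x) ((1 - r^2).toNNReal) B := by
    intro B hB
    rw [gaussianReal_apply_set _ (vnn_ne_zero hr hr') hB, ← lintegral_indicator hB]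
    congr 1
    ext y
    by_cases hy : y ∈ B <;> simp [Set.indicator, hy]
  by_cases hx : x ≤ Δ
  · simp only [Set.indicator_of_mem (Set.mem_Iic.mpr hx), Pi.one_apply, one_mul]
    rw [K_lemma (ρ * x) (vnn_ne_zero hρ hρ'), rescale_gauss ρ x hρ hρ',
      hinner (Set.Iic 0) measurableSet_Iic]
  · simp only [Set.indicator_of_notMem (fun h => hx (Set.mem_Iic.mp h)), zero_mul,
      lintegral_zero]



lemma measurable_binVar (Δ : ℝ) : Measurable (binVar Δ) := by
  unfold binVar
  exact Measurable.ite (measurableSet_lt measurable_const measurable_id)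
    measurable_const measurable_const

lemma integral_sign {Ω : Type*} [MeasurableSpace Ω] (μ : Measure Ω) [IsFiniteMeasure μ]
    {h : Ω → ℝ} (hh : Measurable h) :
    ∫ ω, Real.sign (h ω) ∂μ
      = (μ {ω | 0 < h ω}).toReal - (μ {ω | h ω < 0}).toReal := by
  have hP : MeasurableSet {ω | 0 < h ω} := measurableSet_lt measurable_const hh
  have hN : MeasurableSet {ω | h ω < 0} := measurableSet_lt hh measurable_const
  have heq : (fun ω => Real.sign (h ω))
      = fun ω => {ω | 0 < h ω}.indicator (1 : Ω → ℝ) ω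
          - {ω | h ω < 0}.indicator (1 : Ω → ℝ) ω := by
    ext ω
    rcases lt_trichotomy (h ω) 0 with hc | hc | hc
    · rw [Real.sign_of_neg hc]
      simp [Set.indicator, hc, not_lt.mpr hc.le, lt_asymm hc]
    · rw [hc, Real.sign_zero]
      simp [Set.indicator, hc]
    · rw [Real.sign_of_pos hc]
      simp [Set.indicator, hc, not_lt.mpr hc.le, lt_asymm hc]
  rw [heq, integral_sub
    (show Integrable ({ω | 0 < h ω}.indicator (1 : Ω → ℝ)) μ from
      (integrable_const 1).indicator hP)
    (show Integrable ({ω | h ω < 0}.indicator (1 : Ω → ℝ)) μ from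
      (integrable_const 1).indicator hN)]
  rw [integral_indicator_one hP, integral_indicator_one hN]
  rfl



/-- bridging function for a continuous–binary pair,
`F_cb(ρ; Δⱼ) = 4Φ₂(Δⱼ, 0; ρ/√2) − 2Φ(Δⱼ)` (Theorem 1). -/
theorem kendall_tau_continuous_binary
    {Ω : Type*} [MeasurableSpace Ω] (μ : Measure Ω) [IsProbabilityMeasure μ]
    (ρ : ℝ) (hρ : ρ ∈ Set.Ioo (-1 : ℝ) 1) (Δj : ℝ)
    (Z Z' : Ω → Fin 2 → ℝ) (hZm : Measurable Z) (hZ'm : Measurable Z')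
    (hZ : Measure.map Z μ = mvGauss (corrMat ρ))
    (hZ' : Measure.map Z' μ = mvGauss (corrMat ρ))
    (hind : IndepFun Z Z' μ) :
    ∫ ω, Real.sign ((binVar Δj (Z ω 0) - binVar Δj (Z' ω 0)) *
        (Z ω 1 - Z' ω 1)) ∂μ
      = 4 * Phi2 (Δj : EReal) ((0 : ℝ) : EReal) (ρ / Real.sqrt 2)
          - 2 * stdPhi (Δj : EReal) := by
  obtain ⟨hρ1, hρ2⟩ := hρ
  have hprob : IsProbabilityMeasure (mvGauss (corrMat ρ)) :=
    hZ ▸ Measure.isProbabilityMeasure_map hZm.aemeasurable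
  set pp := (mvGauss (corrMat ρ)).prod (mvGauss (corrMat ρ)) with hppdef
  have hppf : IsProbabilityMeasure pp := by infer_instance
  have m10 : Measurable (fun q : (Fin 2 → ℝ) × (Fin 2 → ℝ) => q.1 0) :=
    (measurable_pi_apply 0).comp measurable_fst
  have m11 : Measurable (fun q : (Fin 2 → ℝ) × (Fin 2 → ℝ) => q.1 1) :=
    (measurable_pi_apply 1).comp measurable_fst
  have m20 : Measurable (fun q : (Fin 2 → ℝ) × (Fin 2 → ℝ) => q.2 0) :=
    (measurable_pi_apply 0).comp measurable_snd
  have m21 : Measurable (fun q : (Fin 2 → ℝ) × (Fin 2 → ℝ) => q.2 1) :=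
    (measurable_pi_apply 1).comp measurable_snd
  set E1 : Set ((Fin 2 → ℝ) × (Fin 2 → ℝ)) :=
    {q | Δj < q.1 0 ∧ q.2 0 ≤ Δj ∧ q.2 1 < q.1 1} with hE1def
  set E2 : Set ((Fin 2 → ℝ) × (Fin 2 → ℝ)) :=
    {q | q.1 0 ≤ Δj ∧ Δj < q.2 0 ∧ q.1 1 < q.2 1} with hE2def
  set F1 : Set ((Fin 2 → ℝ) × (Fin 2 → ℝ)) :=
    {q | Δj < q.1 0 ∧ q.2 0 ≤ Δj ∧ q.1 1 < q.2 1} with hF1def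
  set F2 : Set ((Fin 2 → ℝ) × (Fin 2 → ℝ)) :=
    {q | q.1 0 ≤ Δj ∧ Δj < q.2 0 ∧ q.2 1 < q.1 1} with hF2def
  set S1 : Set ((Fin 2 → ℝ) × (Fin 2 → ℝ)) :=
    {q | q.1 0 ≤ Δj ∧ q.1 1 < q.2 1} with hS1def
  set S2 : Set ((Fin 2 → ℝ) × (Fin 2 → ℝ)) :=
    {q | q.1 0 ≤ Δj ∧ q.2 1 < q.1 1} with hS2def
  set S3 : Set ((Fin 2 → ℝ) × (Fin 2 → ℝ)) :=
    {q | (q.1 0 ≤ Δj ∧ q.2 0 ≤ Δj) ∧ q.1 1 < q.2 1} with hS3def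
  set S3' : Set ((Fin 2 → ℝ) × (Fin 2 → ℝ)) :=
    {q | (q.1 0 ≤ Δj ∧ q.2 0 ≤ Δj) ∧ q.2 1 < q.1 1} with hS3'def
  set W : Set ((Fin 2 → ℝ) × (Fin 2 → ℝ)) :=
    {q | q.1 0 ≤ Δj ∧ q.1 1 ≤ q.2 1} with hWdef
  set Wd : Set ((Fin 2 → ℝ) × (Fin 2 → ℝ)) :=
    {q | q.1 0 ≤ Δj ∧ q.1 1 = q.2 1} with hWddef
  set A1 : Set ((Fin 2 → ℝ) × (Fin 2 → ℝ)) := {q | q.1 0 ≤ Δj} with hA1def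
  have hmE1 : MeasurableSet E1 :=
    ((measurableSet_lt measurable_const m10).inter
      ((measurableSet_le m20 measurable_const).inter (measurableSet_lt m21 m11)))
  have hmE2 : MeasurableSet E2 :=
    ((measurableSet_le m10 measurable_const).inter
      ((measurableSet_lt measurable_const m20).inter (measurableSet_lt m11 m21)))
  have hmF1 : MeasurableSet F1 :=
    ((measurableSet_lt measurable_const m10).inter
      ((measurableSet_le m20 measurable_const).inter (measurableSet_lt m11 m21)))
  have hmF2 : MeasurableSet F2 :=
    ((measurableSet_le m10 measurable_const).inter
      ((measurableSet_lt measurable_const m20).inter (measurableSet_lt m21 m11)))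
  have hmS1 : MeasurableSet S1 :=
    (measurableSet_le m10 measurable_const).inter (measurableSet_lt m11 m21)
  have hmS2 : MeasurableSet S2 :=
    (measurableSet_le m10 measurable_const).inter (measurableSet_lt m21 m11)
  have hmS3 : MeasurableSet S3 :=
    ((measurableSet_le m10 measurable_const).inter
      (measurableSet_le m20 measurable_const)).inter (measurableSet_lt m11 m21)
  have hmS3' : MeasurableSet S3' :=
    ((measurableSet_le m10 measurable_const).inter
      (measurableSet_le m20 measurable_const)).inter (measurableSet_lt m21 m11)
  have hmW : MeasurableSet W :=
    (measurableSet_le m10 measurable_const).inter (measurableSet_le m11 m21)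
  have hmWd : MeasurableSet Wd :=
    (measurableSet_le m10 measurable_const).inter (measurableSet_eq_fun m11 m21)
  have hmA1 : MeasurableSet A1 := measurableSet_le m10 measurable_const
  -- LHS as difference of measures
  have hpairm : Measurable (fun ω => (Z ω, Z' ω)) := hZm.prodMk hZ'm
  have hmap : Measure.map (fun ω => (Z ω, Z' ω)) μ = pp := by
    rw [hppdef]
    exact ((indepFun_iff_map_prod_eq_prod_map_map hZm.aemeasurable
      hZ'm.aemeasurable).mp hind).trans (by rw [hZ, hZ'])
  have hgm : Measurable (fun q : (Fin 2 → ℝ) × (Fin 2 → ℝ) =>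
      (binVar Δj (q.1 0) - binVar Δj (q.2 0)) * (q.1 1 - q.2 1)) :=
    (((measurable_binVar Δj).comp m10).sub ((measurable_binVar Δj).comp m20)).mul
      (m11.sub m21)
  have hLHS : ∫ ω, Real.sign ((binVar Δj (Z ω 0) - binVar Δj (Z' ω 0)) *
        (Z ω 1 - Z' ω 1)) ∂μ
      = (pp {q : (Fin 2 → ℝ) × (Fin 2 → ℝ) |
            0 < (binVar Δj (q.1 0) - binVar Δj (q.2 0)) * (q.1 1 - q.2 1)}).toReal
        - (pp {q : (Fin 2 → ℝ) × (Fin 2 → ℝ) |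
            (binVar Δj (q.1 0) - binVar Δj (q.2 0)) * (q.1 1 - q.2 1) < 0}).toReal := by
    rw [integral_sign μ (show Measurable fun ω =>
      (binVar Δj (Z ω 0) - binVar Δj (Z' ω 0)) * (Z ω 1 - Z' ω 1) from
      hgm.comp hpairm)]
    rw [← hmap, Measure.map_apply hpairm (measurableSet_lt measurable_const hgm),
      Measure.map_apply hpairm (measurableSet_lt hgm measurable_const)]
    rfl
  -- decomposition of the positivity/negativity sets
  have hPE : {q : (Fin 2 → ℝ) × (Fin 2 → ℝ) |
        0 < (binVar Δj (q.1 0) - binVar Δj (q.2 0)) * (q.1 1 - q.2 1)}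
      = E1 ∪ E2 := by
    ext q
    simp only [Set.mem_setOf_eq, Set.mem_union, hE1def, hE2def]
    by_cases h1 : Δj < q.1 0 <;> by_cases h2 : Δj < q.2 0 <;>
      rw [binVar, binVar]
    · rw [if_pos h1, if_pos h2]
      constructor
      · intro h; nlinarith
      · rintro (⟨_, hb, _⟩ | ⟨ha, _, _⟩)
        · exact absurd hb (not_le.mpr h2)
        · exact absurd ha (not_le.mpr h1)
    · rw [if_pos h1, if_neg h2]
      constructor
      · intro h
        exact Or.inl ⟨h1, not_lt.mp h2, by nlinarith⟩
      · rintro (⟨_, _, hd⟩ | ⟨ha, _, _⟩)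
        · nlinarith
        · exact absurd ha (not_le.mpr h1)
    · rw [if_neg h1, if_pos h2]
      constructor
      · intro h
        exact Or.inr ⟨not_lt.mp h1, h2, by nlinarith⟩
      · rintro (⟨hb, _, _⟩ | ⟨_, _, hd⟩)
        · exact absurd hb h1
        · nlinarith
    · rw [if_neg h1, if_neg h2]
      constructor
      · intro h; nlinarith
      · rintro (⟨hb, _, _⟩ | ⟨_, hc, _⟩)
        · exact absurd hb h1
        · exact absurd hc h2
  have hNE : {q : (Fin 2 → ℝ) × (Fin 2 → ℝ) |
        (binVar Δj (q.1 0) - binVar Δj (q.2 0)) * (q.1 1 - q.2 1) < 0}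
      = F1 ∪ F2 := by
    ext q
    simp only [Set.mem_setOf_eq, Set.mem_union, hF1def, hF2def]
    by_cases h1 : Δj < q.1 0 <;> by_cases h2 : Δj < q.2 0 <;>
      rw [binVar, binVar]
    · rw [if_pos h1, if_pos h2]
      constructor
      · intro h; nlinarith
      · rintro (⟨_, hb, _⟩ | ⟨ha, _, _⟩)
        · exact absurd hb (not_le.mpr h2)
        · exact absurd ha (not_le.mpr h1)
    · rw [if_pos h1, if_neg h2]
      constructor
      · intro h
        exact Or.inl ⟨h1, not_lt.mp h2, by nlinarith⟩
      · rintro (⟨_, _, hd⟩ | ⟨ha, _, _⟩)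
        · nlinarith
        · exact absurd ha (not_le.mpr h1)
    · rw [if_neg h1, if_pos h2]
      constructor
      · intro h
        exact Or.inr ⟨not_lt.mp h1, h2, by nlinarith⟩
      · rintro (⟨hb, _, _⟩ | ⟨_, _, hd⟩)
        · exact absurd hb h1
        · nlinarith
    · rw [if_neg h1, if_neg h2]
      constructor
      · intro h; nlinarith
      · rintro (⟨hb, _, _⟩ | ⟨_, hc, _⟩)
        · exact absurd hb h1
        · exact absurd hc h2
  -- swap symmetry
  have hswap : ∀ s : Set ((Fin 2 → ℝ) × (Fin 2 → ℝ)), MeasurableSet s →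
      pp (Prod.swap ⁻¹' s) = pp s := by
    intro s hs
    calc pp (Prod.swap ⁻¹' s) = (Measure.map Prod.swap pp) s :=
          (Measure.map_apply measurable_swap hs).symm
      _ = pp s := by rw [hppdef, Measure.prod_swap]
  have hE1E2 : pp E1 = pp E2 := by
    have he : E1 = Prod.swap ⁻¹' E2 := by
      ext q
      simp only [hE1def, hE2def, Set.mem_preimage, Set.mem_setOf_eq, Prod.fst_swap,
        Prod.snd_swap]
      tauto
    rw [he, hswap E2 hmE2]
  have hF1F2 : pp F1 = pp F2 := by
    have he : F1 = Prod.swap ⁻¹' F2 := by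
      ext q
      simp only [hF1def, hF2def, Set.mem_preimage, Set.mem_setOf_eq, Prod.fst_swap,
        Prod.snd_swap]
      tauto
    rw [he, hswap F2 hmF2]
  have hS3S3' : pp S3 = pp S3' := by
    have he : S3 = Prod.swap ⁻¹' S3' := by
      ext q
      simp only [hS3def, hS3'def, Set.mem_preimage, Set.mem_setOf_eq, Prod.fst_swap,
        Prod.snd_swap]
      tauto
    rw [he, hswap S3' hmS3']
  -- splittings
  have hS1split : pp S1 = pp E2 + pp S3 := by
    have he : S1 = E2 ∪ S3 := by
      ext q
      simp only [hS1def, hE2def, hS3def, Set.mem_union, Set.mem_setOf_eq]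
      constructor
      · rintro ⟨ha, hd⟩
        by_cases h : Δj < q.2 0
        · exact Or.inl ⟨ha, h, hd⟩
        · exact Or.inr ⟨⟨ha, not_lt.mp h⟩, hd⟩
      · rintro (⟨ha, _, hd⟩ | ⟨⟨ha, _⟩, hd⟩) <;> exact ⟨ha, hd⟩
    have hd : Disjoint E2 S3 := by
      rw [Set.disjoint_left]
      rintro q ⟨_, hq, _⟩ ⟨⟨_, hq'⟩, _⟩
      exact absurd hq' (not_le.mpr hq)
    rw [he, measure_union hd hmS3]
  have hS2split : pp S2 = pp F2 + pp S3' := by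
    have he : S2 = F2 ∪ S3' := by
      ext q
      simp only [hS2def, hF2def, hS3'def, Set.mem_union, Set.mem_setOf_eq]
      constructor
      · rintro ⟨ha, hd⟩
        by_cases h : Δj < q.2 0
        · exact Or.inl ⟨ha, h, hd⟩
        · exact Or.inr ⟨⟨ha, not_lt.mp h⟩, hd⟩
      · rintro (⟨ha, _, hd⟩ | ⟨⟨ha, _⟩, hd⟩) <;> exact ⟨ha, hd⟩
    have hd : Disjoint F2 S3' := by
      rw [Set.disjoint_left]
      rintro q ⟨_, hq, _⟩ ⟨⟨_, hq'⟩, _⟩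
      exact absurd hq' (not_le.mpr hq)
    rw [he, measure_union hd hmS3']
  have hWsplit : pp W = pp S1 + pp Wd := by
    have he : W = S1 ∪ Wd := by
      ext q
      simp only [hWdef, hS1def, hWddef, Set.mem_union, Set.mem_setOf_eq]
      constructor
      · rintro ⟨ha, hd⟩
        rcases lt_or_eq_of_le hd with h | h
        · exact Or.inl ⟨ha, h⟩
        · exact Or.inr ⟨ha, h⟩
      · rintro (⟨ha, hd⟩ | ⟨ha, hd⟩)
        · exact ⟨ha, hd.le⟩
        · exact ⟨ha, hd.le⟩
    have hd : Disjoint S1 Wd := by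
      rw [Set.disjoint_left]
      rintro q ⟨_, hq⟩ ⟨_, hq'⟩
      exact absurd hq' hq.ne
    rw [he, measure_union hd hmWd]
  have hA1split : pp A1 = pp W + pp S2 := by
    have he : A1 = W ∪ S2 := by
      ext q
      simp only [hA1def, hWdef, hS2def, Set.mem_union, Set.mem_setOf_eq]
      constructor
      · intro ha
        rcases le_or_gt (q.1 1) (q.2 1) with h | h
        · exact Or.inl ⟨ha, h⟩
        · exact Or.inr ⟨ha, h⟩
      · rintro (⟨ha, _⟩ | ⟨ha, _⟩) <;> exact ha
    have hd : Disjoint W S2 := by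
      rw [Set.disjoint_left]
      rintro q ⟨_, hq⟩ ⟨_, hq'⟩
      exact absurd hq (not_le.mpr hq')
    rw [he, measure_union hd hmS2]
  -- the diagonal is null
  have hWd0 : pp Wd = 0 := by
    have hmD : MeasurableSet {q : (Fin 2 → ℝ) × (Fin 2 → ℝ) | q.1 1 = q.2 1} :=
      measurableSet_eq_fun m11 m21
    have hD : pp {q : (Fin 2 → ℝ) × (Fin 2 → ℝ) | q.1 1 = q.2 1} = 0 := by
      rw [hppdef, Measure.prod_apply hmD]
      have hsec : ∀ z : Fin 2 → ℝ,
          (mvGauss (corrMat ρ))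
            (Prod.mk z ⁻¹' {q : (Fin 2 → ℝ) × (Fin 2 → ℝ) | q.1 1 = q.2 1}) = 0 := by
        intro z
        have he : Prod.mk z ⁻¹' {q : (Fin 2 → ℝ) × (Fin 2 → ℝ) | q.1 1 = q.2 1}
            = {z' : Fin 2 → ℝ | z' 1 ∈ ({z 1} : Set ℝ)} := by
          ext z'
          simp [eq_comm]
        rw [he, mvGauss_snd_s2 hρ1 hρ2 (measurableSet_singleton _),
          gaussianReal_apply_set 0 one_ne_zero (measurableSet_singleton _)]
        exact setLIntegral_measure_zero _ _ Real.volume_singleton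
      simp_rw [hsec]
      simp
    exact measure_mono_null (fun q hq => hq.2) hD
  -- the W probability is the bivariate normal probability
  have hWval : pp W = mvGauss (corrMat (ρ / Real.sqrt 2))
      {z : Fin 2 → ℝ | z 0 ≤ Δj ∧ z 1 ≤ 0} := by
    rw [hppdef, Measure.prod_apply hmW]
    have hsec : ∀ z : Fin 2 → ℝ, (mvGauss (corrMat ρ)) (Prod.mk z ⁻¹' W)
        = (Set.Iic Δj).indicator (1 : ℝ → ℝ≥0∞) (z 0)
          * gaussianReal 0 1 (Set.Ici (z 1)) := by
      intro z
      by_cases hz : z 0 ≤ Δj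
      · have he : Prod.mk z ⁻¹' W = {z' : Fin 2 → ℝ | z' 1 ∈ Set.Ici (z 1)} := by
          ext z'
          simp [hWdef, hz, Set.mem_Ici]
        rw [he, mvGauss_snd_s2 hρ1 hρ2 measurableSet_Ici,
          Set.indicator_of_mem (Set.mem_Iic.mpr hz), Pi.one_apply, one_mul]
      · have he : Prod.mk z ⁻¹' W = ∅ := by
          ext z'
          simp [hWdef, hz]
        rw [he, measure_empty, Set.indicator_of_notMem (by simpa using hz), zero_mul]
    simp_rw [hsec]
    exact mvGauss_R hρ1 hρ2 Δj
  have hA1val : pp A1 = gaussianReal 0 1 (Set.Iic Δj) := by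
    have he : A1 = {z : Fin 2 → ℝ | z 0 ≤ Δj} ×ˢ (Set.univ : Set (Fin 2 → ℝ)) := by
      ext q
      simp [hA1def]
    rw [hppdef, he, Measure.prod_prod, measure_univ, mul_one, mvGauss_fst_Iic hρ1 hρ2]
  -- RHS identifications
  have hPhi2 : Phi2 (Δj : EReal) ((0 : ℝ) : EReal) (ρ / Real.sqrt 2)
      = (mvGauss (corrMat (ρ / Real.sqrt 2))
          {z : Fin 2 → ℝ | z 0 ≤ Δj ∧ z 1 ≤ 0}).toReal := by
    rw [Phi2, PhiVec]
    congr 2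
    ext x
    simp [Fin.forall_fin_two, EReal.coe_le_coe_iff]
  have hstd : stdPhi (Δj : EReal) = (gaussianReal 0 1 (Set.Iic Δj)).toReal := by
    rw [stdPhi]
    congr 2
    ext x
    simp [EReal.coe_le_coe_iff]
  -- final arithmetic
  have hfin : ∀ s : Set ((Fin 2 → ℝ) × (Fin 2 → ℝ)), pp s ≠ ⊤ :=
    fun s => measure_ne_top pp s
  rw [hLHS, hPE, hNE, measure_union ?hdE hmE2, measure_union ?hdF hmF2]
  case hdE =>
    rw [Set.disjoint_left]
    rintro q ⟨hq, _⟩ ⟨hq', _⟩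
    exact absurd hq' (not_le.mpr hq)
  case hdF =>
    rw [Set.disjoint_left]
    rintro q ⟨hq, _⟩ ⟨hq', _⟩
    exact absurd hq' (not_le.mpr hq)
  rw [hE1E2, hF1F2, hPhi2, hstd, ← hA1val, ← hWval]
  rw [ENNReal.toReal_add (hfin _) (hfin _), ENNReal.toReal_add (hfin _) (hfin _)]
  have e2 : (pp S1).toReal = (pp E2).toReal + (pp S3).toReal := by
    rw [hS1split, ENNReal.toReal_add (hfin _) (hfin _)]
  have e3 : (pp S2).toReal = (pp F2).toReal + (pp S3).toReal := by
    rw [hS2split, ENNReal.toReal_add (hfin _) (hfin _), hS3S3']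
  have e4 : (pp W).toReal = (pp S1).toReal := by
    rw [hWsplit, ENNReal.toReal_add (hfin _) (hfin _), hWd0]
    simp
  have e5 : (pp A1).toReal = (pp W).toReal + (pp S2).toReal := by
    rw [hA1split, ENNReal.toReal_add (hfin _) (hfin _)]
  linarith [e2, e3, e4, e5]
end
end

section
/- Fix an integer l ≥ 2, cutoffs −∞ = Δ_0 < Δ_1 < ⋯ < Δ_{l−1} < Δ_l = +∞, and Δ_b ∈ ℝ. Define for ρ ∈ (−1, 1): F_ob(ρ) = 2·Σ_{r=1}^{l−1} [Φ_2(Δ_r, Δ_b; ρ)·Φ(Δ_{r+1}) − Φ(Δ_r)·Φ_2(Δ_{r+1}, Δ_b; ρ)], with the conventions Φ(+∞) = 1 and Φ_2(+∞, b; ρ) = Φ(b). Then F_ob is strictly increasing on (−1, 1): for ρ_1 < ρ_2 in (−1, 1), F_ob(ρ_1) < F_ob(ρ_2). (Invertibility of the ordinal–binary bridging function, from Theorem 2.) -/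
open MeasureTheory ProbabilityTheory Real Matrix
open Set Filter Metric Topology Finset
open scoped NNReal ENNReal

noncomputable section

namespace FobAux


/-- standard normal pdf -/
def phiR (x : ℝ) : ℝ := gaussianPDFReal 0 1 x

lemma phiR_eq (x : ℝ) : phiR x = (Real.sqrt (2*π))⁻¹ * Real.exp (-(x^2)/2) := by
  simp [phiR, gaussianPDFReal]

lemma phiR_pos (x : ℝ) : 0 < phiR x := gaussianPDFReal_pos _ _ _ one_ne_zero

lemma continuous_phiR : Continuous phiR := by
  rw [funext phiR_eq]; fun_prop

lemma integrable_phiR : Integrable phiR := integrable_gaussianPDFReal 0 1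

lemma phiR_le (x : ℝ) : phiR x ≤ 1 := by
  rw [phiR_eq]
  have h1 : Real.exp (-(x^2)/2) ≤ 1 := by
    rw [Real.exp_le_one_iff]; nlinarith [sq_nonneg x]
  have h2 : (1:ℝ) ≤ Real.sqrt (2*π) := by
    rw [show (1:ℝ) = Real.sqrt 1 by simp]
    exact Real.sqrt_le_sqrt (by nlinarith [Real.pi_gt_three])
  calc (Real.sqrt (2*π))⁻¹ * Real.exp (-(x^2)/2) ≤ (Real.sqrt (2*π))⁻¹ * 1 := by
        apply mul_le_mul_of_nonneg_left h1; positivity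
    _ ≤ 1 := by rw [mul_one]; exact inv_le_one_of_one_le₀ h2

/-- standard normal CDF -/
def PhiR (t : ℝ) : ℝ := ∫ x in Iic t, phiR x

lemma setInt_phiR_pos {s : Set ℝ} (hs : MeasurableSet s) (hvol : 0 < volume s) :
    0 < ∫ x in s, phiR x := by
  rw [setIntegral_pos_iff_support_of_nonneg_ae
    (Eventually.of_forall (fun x => (phiR_pos x).le)) integrable_phiR.integrableOn]
  have : (Function.support phiR) = univ := by
    ext x; simp [Function.support, (phiR_pos x).ne']
  rwa [this, univ_inter]

lemma PhiR_nonneg (t : ℝ) : 0 ≤ PhiR t :=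
  setIntegral_nonneg measurableSet_Iic (fun x _ => (phiR_pos x).le)

lemma PhiR_pos (t : ℝ) : 0 < PhiR t :=
  setInt_phiR_pos measurableSet_Iic (by simp [Real.volume_Iic])

lemma PhiR_lt_one (t : ℝ) : PhiR t < 1 := by
  have h1 : (1:ℝ) = ∫ x, phiR x := (integral_gaussianPDFReal_eq_one 0 one_ne_zero).symm
  have hs : (0:ℝ) < ∫ x in Ioi t, phiR x :=
    setInt_phiR_pos measurableSet_Ioi (by simp [Real.volume_Ioi])
  have h2 := intervalIntegral.integral_Iic_add_Ioi
    (integrable_phiR.integrableOn) (integrable_phiR.integrableOn) (b := t) (μ := volume)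
  rw [PhiR]
  rw [h1]
  rw [← h2]
  linarith

lemma PhiR_le_one (t : ℝ) : PhiR t ≤ 1 := (PhiR_lt_one t).le

lemma PhiR_strictMono : StrictMono PhiR := by
  intro a b hab
  have h : PhiR b - PhiR a = ∫ x in a..b, phiR x :=
    intervalIntegral.integral_Iic_sub_Iic integrable_phiR.integrableOn
      integrable_phiR.integrableOn
  have : 0 < ∫ x in a..b, phiR x :=
    intervalIntegral.intervalIntegral_pos_of_pos (integrable_phiR.intervalIntegrable)
      (fun x => phiR_pos x) hab
  linarith [h, this]

lemma stdPhi_coe (t : ℝ) : stdPhi (t : EReal) = PhiR t := by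
  have hset : {x : ℝ | (x:EReal) ≤ (t:EReal)} = Iic t := by
    ext x; simp
  rw [stdPhi, hset, gaussianReal_apply_eq_integral 0 one_ne_zero,
    show (∫ x in Iic t, gaussianPDFReal 0 1 x) = PhiR t from rfl,
    ENNReal.toReal_ofReal (PhiR_nonneg t)]

lemma stdPhi_bot : stdPhi ⊥ = 0 := by
  have : {x : ℝ | (x:EReal) ≤ ⊥} = ∅ := by
    ext x; simp
  simp [stdPhi, this]

lemma stdPhi_top : stdPhi ⊤ = 1 := by
  have : {x : ℝ | (x:EReal) ≤ ⊤} = univ := by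
    ext x; simp
  simp [stdPhi, this]

section Bsec


variable {ρ : ℝ} (hρ : ρ ∈ Ioo (-1:ℝ) 1)
include hρ

lemma one_sub_sq_pos : 0 < 1 - ρ^2 := by
  obtain ⟨h1, h2⟩ := hρ; nlinarith

lemma corrMat_det : (corrMat ρ).det = 1 - ρ^2 := by
  rw [corrMat, Matrix.det_fin_two_of]; ring

lemma corrMat_inv : (corrMat ρ)⁻¹ = (1 - ρ^2)⁻¹ • !![1, -ρ; -ρ, 1] := by
  have hd : (corrMat ρ).det = 1 - ρ^2 := corrMat_det hρ
  rw [Matrix.inv_def, hd, Ring.inverse_eq_inv']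
  congr 1
  rw [corrMat, Matrix.adjugate_fin_two_of]

lemma quadForm (x y : ℝ) :
    (![x, y] ⬝ᵥ (corrMat ρ)⁻¹ *ᵥ ![x, y]) = (x^2 - 2*ρ*x*y + y^2) / (1 - ρ^2) := by
  rw [corrMat_inv hρ]
  simp [Matrix.mulVec, dotProduct, Fin.sum_univ_two]
  field_simp
  ring

lemma sqrt_const_eq : Real.sqrt ((2*π)^2 * (1 - ρ^2))
    = Real.sqrt (2*π) * Real.sqrt (2*π*(1-ρ^2)) := by
  rw [show (2*π)^2 * (1 - ρ^2) = (2*π) * (2*π*(1-ρ^2)) by ring]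
  exact Real.sqrt_mul (by positivity) _

lemma mvGaussPDF_factor (x y : ℝ) :
    mvGaussPDF (corrMat ρ) ![x, y]
      = phiR x * gaussianPDFReal (ρ*x) (Real.toNNReal (1 - ρ^2)) y := by
  have h2 : 0 < 1 - ρ^2 := one_sub_sq_pos hρ
  have hne : (1:ℝ) - ρ^2 ≠ 0 := h2.ne'
  have hv : ((Real.toNNReal (1 - ρ^2) : ℝ≥0) : ℝ) = 1 - ρ^2 := Real.coe_toNNReal _ h2.le
  have hexp : -((x^2 - 2*ρ*x*y + y^2)/(1-ρ^2))/2 = -(x^2)/2 + -((y-ρ*x)^2)/(2*(1-ρ^2)) := by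
    field_simp
    ring
  rw [mvGaussPDF, corrMat_det hρ, quadForm hρ, phiR_eq, gaussianPDFReal, hv]
  rw [show ((2:ℝ)*π)^(2:ℕ) = (2*π)^(2:ℕ) by norm_num, sqrt_const_eq hρ]
  rw [mul_inv, mul_mul_mul_comm, hexp, Real.exp_add]

lemma mvGaussPDF_factor' (x y : ℝ) :
    mvGaussPDF (corrMat ρ) ![x, y]
      = phiR y * gaussianPDFReal (ρ*y) (Real.toNNReal (1 - ρ^2)) x := by
  have h2 : 0 < 1 - ρ^2 := one_sub_sq_pos hρ
  have hne : (1:ℝ) - ρ^2 ≠ 0 := h2.ne'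
  have hv : ((Real.toNNReal (1 - ρ^2) : ℝ≥0) : ℝ) = 1 - ρ^2 := Real.coe_toNNReal _ h2.le
  have hexp : -((x^2 - 2*ρ*x*y + y^2)/(1-ρ^2))/2 = -(y^2)/2 + -((x-ρ*y)^2)/(2*(1-ρ^2)) := by
    field_simp
    ring
  rw [mvGaussPDF, corrMat_det hρ, quadForm hρ, phiR_eq, gaussianPDFReal, hv]
  rw [show ((2:ℝ)*π)^(2:ℕ) = (2*π)^(2:ℕ) by norm_num, sqrt_const_eq hρ]
  rw [mul_inv, mul_mul_mul_comm, hexp, Real.exp_add]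


end Bsec


lemma vNN_ne_zero {ρ : ℝ} (hρ : ρ ∈ Ioo (-1:ℝ) 1) : Real.toNNReal (1 - ρ^2) ≠ 0 := by
  simp only [ne_eq, Real.toNNReal_eq_zero, not_le]
  exact one_sub_sq_pos hρ

lemma continuous_gpdf2 (m : ℝ) (v : ℝ≥0) :
    Continuous (fun q : ℝ × ℝ => gaussianPDFReal (m * q.1) v q.2) := by
  unfold gaussianPDFReal
  fun_prop

/-- the product-space density -/
def F2 (ρ : ℝ) (q : ℝ × ℝ) : ℝ :=
  phiR q.1 * gaussianPDFReal (ρ * q.1) (Real.toNNReal (1 - ρ^2)) q.2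

lemma F2_nonneg (ρ : ℝ) (q : ℝ × ℝ) : 0 ≤ F2 ρ q :=
  mul_nonneg (phiR_pos _).le (gaussianPDFReal_nonneg _ _ _)

lemma continuous_F2 (ρ : ℝ) : Continuous (F2 ρ) :=
  (continuous_phiR.comp continuous_fst).mul (continuous_gpdf2 ρ _)

lemma integrable_F2 {ρ : ℝ} (hρ : ρ ∈ Ioo (-1:ℝ) 1) :
    Integrable (F2 ρ) (volume : Measure (ℝ × ℝ)) := by
  rw [Measure.volume_eq_prod]
  rw [integrable_prod_iff (continuous_F2 ρ).aestronglyMeasurable]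
  refine ⟨?_, ?_⟩
  · filter_upwards with x
    simpa [F2] using
      (integrable_gaussianPDFReal (ρ*x) (Real.toNNReal (1 - ρ^2))).const_mul (phiR x)
  · have heq : (fun x => ∫ y, ‖F2 ρ (x, y)‖) = phiR := by
      funext x
      have : (fun y => ‖F2 ρ (x, y)‖)
          = fun y => phiR x * gaussianPDFReal (ρ * x) (Real.toNNReal (1 - ρ^2)) y := by
        funext y
        rw [Real.norm_of_nonneg (F2_nonneg ρ (x, y))]; rfl
      rw [this, integral_const_mul, integral_gaussianPDFReal_eq_one _ (vNN_ne_zero hρ), mul_one]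
    rw [heq]
    exact integrable_phiR

/-- generic core computation -/
lemma mvGauss_core {ρ : ℝ} (hρ : ρ ∈ Ioo (-1:ℝ) 1)
    (E : (Fin 2 → ℝ) ≃ᵐ (ℝ × ℝ)) (hE : MeasurePreserving E volume volume)
    (hpdf : ∀ x, mvGaussPDF (corrMat ρ) x = F2 ρ (E x))
    (s t : Set ℝ) (hs : MeasurableSet s) (ht : MeasurableSet t) :
    (mvGauss (corrMat ρ) (E ⁻¹' (s ×ˢ t))).toReal
      = ∫ x in s, (phiR x *
          ∫ y in t, gaussianPDFReal (ρ*x) (Real.toNNReal (1 - ρ^2)) y) := by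
  have hst : MeasurableSet (s ×ˢ t) := hs.prod ht
  have hIF : Integrable (F2 ρ) (volume : Measure (ℝ × ℝ)) := integrable_F2 hρ
  have h1 : mvGauss (corrMat ρ) (E ⁻¹' (s ×ˢ t))
      = ∫⁻ x in E ⁻¹' (s ×ˢ t), ENNReal.ofReal (mvGaussPDF (corrMat ρ) x) := by
    rw [mvGauss, withDensity_apply _ (hst.preimage E.measurable)]
  have h2 : (∫⁻ x in E ⁻¹' (s ×ˢ t), ENNReal.ofReal (mvGaussPDF (corrMat ρ) x))
      = ∫⁻ q in s ×ˢ t, ENNReal.ofReal (F2 ρ q) := by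
    have hres : MeasurePreserving E (volume.restrict (E ⁻¹' (s ×ˢ t)))
        (volume.restrict (s ×ˢ t)) :=
      hE.restrict_preimage_emb E.measurableEmbedding (s ×ˢ t)
    rw [← hres.lintegral_comp (((continuous_F2 ρ).measurable).ennreal_ofReal)]
    congr 1
    funext x
    rw [hpdf x]
  have h3 : (∫⁻ q in s ×ˢ t, ENNReal.ofReal (F2 ρ q))
      = ENNReal.ofReal (∫ q in s ×ˢ t, F2 ρ q) := by
    rw [ofReal_integral_eq_lintegral_ofReal hIF.integrableOn
      (Eventually.of_forall (F2_nonneg ρ))]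
  have h4 : (∫ q in s ×ˢ t, F2 ρ q) = ∫ x in s, ∫ y in t, F2 ρ (x, y) := by
    rw [Measure.volume_eq_prod]
    refine setIntegral_prod _ ?_
    rw [← Measure.volume_eq_prod]
    exact hIF.integrableOn
  rw [h1, h2, h3, ENNReal.toReal_ofReal
    (setIntegral_nonneg hst (fun q _ => F2_nonneg ρ q)), h4]
  congr 1
  funext x
  rw [← integral_const_mul]
  rfl


lemma gaussIic (m : ℝ) {v : ℝ≥0} (hv : v ≠ 0) (b : ℝ) :
    (∫ y in Iic b, gaussianPDFReal m v y) = PhiR ((b - m) / Real.sqrt v) := by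
  have hv0 : (0:ℝ) < Real.sqrt v := Real.sqrt_pos.2 (by exact_mod_cast pos_iff_ne_zero.2 hv)
  have hmap1 : (gaussianReal 0 1).map (fun x => Real.sqrt v * x) = gaussianReal 0 v := by
    have := gaussianReal_map_const_mul (μ := 0) (v := 1) (Real.sqrt v)
    have hvv : (NNReal.mk ((Real.sqrt v)^2) (sq_nonneg _) : ℝ≥0) * 1 = v := by
      rw [mul_one]
      ext
      exact Real.sq_sqrt (by positivity)
    rw [hvv, mul_zero] at this
    exact this
  have hmap2 : (gaussianReal 0 v).map (· + m) = gaussianReal m v := by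
    have := gaussianReal_map_add_const (μ := 0) (v := v) m
    rwa [zero_add] at this
  have key : gaussianReal m v (Iic b) = gaussianReal 0 1 (Iic ((b - m)/Real.sqrt v)) := by
    rw [← hmap2, Measure.map_apply (measurable_add_const m) measurableSet_Iic,
      preimage_add_const_Iic, ← hmap1,
      Measure.map_apply (measurable_const_mul _) measurableSet_Iic]
    congr 1
    exact preimage_const_mul_Iic₀ _ hv0
  have h1 : gaussianReal m v (Iic b)
      = ENNReal.ofReal (∫ y in Iic b, gaussianPDFReal m v y) :=
    gaussianReal_apply_eq_integral m hv _
  have h2 : gaussianReal 0 1 (Iic ((b - m)/Real.sqrt v))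
      = ENNReal.ofReal (PhiR ((b - m)/Real.sqrt v)) :=
    gaussianReal_apply_eq_integral 0 one_ne_zero _
  rw [h1, h2] at key
  have := congrArg ENNReal.toReal key
  rwa [ENNReal.toReal_ofReal
      (setIntegral_nonneg measurableSet_Iic fun y _ => gaussianPDFReal_nonneg _ _ _),
    ENNReal.toReal_ofReal (PhiR_nonneg _)] at this

lemma sqrt_toNNReal {ρ : ℝ} (hρ : ρ ∈ Ioo (-1:ℝ) 1) :
    Real.sqrt ((Real.toNNReal (1 - ρ^2) : ℝ≥0) : ℝ) = Real.sqrt (1 - ρ^2) := by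
  rw [Real.coe_toNNReal _ (one_sub_sq_pos hρ).le]

lemma vec_eta (x : Fin 2 → ℝ) : (![x 0, x 1] : Fin 2 → ℝ) = x := by
  funext i; fin_cases i <;> rfl

lemma Phi2_coe (a b : ℝ) {ρ : ℝ} (hρ : ρ ∈ Ioo (-1:ℝ) 1) :
    Phi2 (a : EReal) (b : EReal) ρ
      = ∫ x in Iic a, phiR x * PhiR ((b - ρ*x) / Real.sqrt (1 - ρ^2)) := by
  have hset : {z : Fin 2 → ℝ | ∀ i, (z i : EReal) ≤ ![(a : EReal), (b : EReal)] i}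
      = (MeasurableEquiv.piFinTwo (fun _ => ℝ)) ⁻¹' (Iic a ×ˢ Iic b) := by
    ext z
    simp [Fin.forall_fin_two, MeasurableEquiv.piFinTwo, EReal.coe_le_coe_iff]
  rw [Phi2, PhiVec, hset,
    mvGauss_core hρ _ (volume_preserving_piFinTwo (fun _ => ℝ))
      (fun x => by
        rw [show (MeasurableEquiv.piFinTwo (fun _ => ℝ)) x = (x 0, x 1) from rfl]
        rw [show F2 ρ (x 0, x 1)
          = phiR (x 0) * gaussianPDFReal (ρ * (x 0)) (Real.toNNReal (1 - ρ^2)) (x 1) from rfl,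
          ← mvGaussPDF_factor hρ, vec_eta])
      (Iic a) (Iic b) measurableSet_Iic measurableSet_Iic]
  congr 1
  funext x
  rw [gaussIic _ (vNN_ne_zero hρ), sqrt_toNNReal hρ]

lemma Phi2_top (b : ℝ) {ρ : ℝ} (hρ : ρ ∈ Ioo (-1:ℝ) 1) :
    Phi2 (⊤ : EReal) (b : EReal) ρ = PhiR b := by
  set E : (Fin 2 → ℝ) ≃ᵐ (ℝ × ℝ) :=
    (MeasurableEquiv.piFinTwo (fun _ => ℝ)).trans MeasurableEquiv.prodComm with hEdef
  have hswap : MeasurePreserving (Prod.swap : ℝ × ℝ → ℝ × ℝ) volume volume := by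
    refine ⟨measurable_swap, ?_⟩
    rw [Measure.volume_eq_prod]
    exact Measure.prod_swap
  have hE : MeasurePreserving E volume volume :=
    (show MeasurePreserving
        ((Prod.swap : ℝ × ℝ → ℝ × ℝ) ∘ ⇑(MeasurableEquiv.piFinTwo fun _ => ℝ)) volume volume
      from hswap.comp (volume_preserving_piFinTwo (fun _ => ℝ)))
  have hset : {z : Fin 2 → ℝ | ∀ i, (z i : EReal) ≤ ![(⊤ : EReal), (b : EReal)] i}
      = E ⁻¹' (Iic b ×ˢ univ) := by
    ext z
    simp [Fin.forall_fin_two, E, MeasurableEquiv.piFinTwo, MeasurableEquiv.prodComm,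
      EReal.coe_le_coe_iff]
  rw [Phi2, PhiVec, hset,
    mvGauss_core hρ E hE
      (fun x => by
        rw [show E x = (x 1, x 0) from rfl]
        rw [show F2 ρ (x 1, x 0)
          = phiR (x 1) * gaussianPDFReal (ρ * (x 1)) (Real.toNNReal (1 - ρ^2)) (x 0) from rfl,
          ← mvGaussPDF_factor' hρ, vec_eta])
      (Iic b) univ measurableSet_Iic MeasurableSet.univ]
  have hone : ∀ x:ℝ, (∫ y in (univ : Set ℝ),
      gaussianPDFReal (ρ*x) (Real.toNNReal (1-ρ^2)) y) = 1 := fun x => by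
    rw [Measure.restrict_univ, integral_gaussianPDFReal_eq_one _ (vNN_ne_zero hρ)]
  simp only [hone, mul_one]
  rfl



lemma hasDerivAt_phiR (t : ℝ) : HasDerivAt phiR (-t * phiR t) t := by
  have h1 : HasDerivAt (fun u : ℝ => -(u^2)/2) (-t) t := by
    have := ((hasDerivAt_pow 2 t).neg).div_const 2
    refine this.congr_deriv (Eq.symm ?_)
    simp
    ring
  have h2 := (h1.exp).const_mul ((Real.sqrt (2*π))⁻¹)
  have hfn : phiR = fun u => (Real.sqrt (2*π))⁻¹ * Real.exp (-(u^2)/2) := funext phiR_eq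
  have h3 : HasDerivAt phiR ((Real.sqrt (2*π))⁻¹ * (Real.exp (-(t^2)/2) * -t)) t := hfn ▸ h2
  convert h3 using 1
  rw [phiR_eq]
  ring

lemma hasDerivAt_PhiR (t : ℝ) : HasDerivAt PhiR (phiR t) t := by
  have key : PhiR = fun u => (∫ x in (0:ℝ)..u, phiR x) + PhiR 0 := by
    funext u
    have := intervalIntegral.integral_Iic_sub_Iic
      (integrable_phiR.integrableOn (s := Iic (0:ℝ))) (integrable_phiR.integrableOn (s := Iic u))
    unfold PhiR
    linarith [this]
  rw [key]
  exact (intervalIntegral.integral_hasDerivAt_right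
    (integrable_phiR.intervalIntegrable)
    (continuous_phiR.stronglyMeasurable.stronglyMeasurableAtFilter)
    continuous_phiR.continuousAt).add_const _

lemma continuous_PhiR : Continuous PhiR :=
  continuous_iff_continuousAt.2 fun t => (hasDerivAt_PhiR t).continuousAt

/-- argument of the inner CDF -/
def gg (b ρ x : ℝ) : ℝ := (b - ρ*x)/Real.sqrt (1-ρ^2)

/-- derivative (in ρ) of the integrand -/
def dI (b ρ x : ℝ) : ℝ := phiR x * (phiR (gg b ρ x) * ((ρ*b - x)/(Real.sqrt (1-ρ^2))^3))

/-- bivariate density section (antiderivative of dI in x) -/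
def Hfun (b ρ x : ℝ) : ℝ := phiR x * phiR (gg b ρ x) / Real.sqrt (1-ρ^2)

lemma s_pos {ρ : ℝ} (hρ : ρ ∈ Ioo (-1:ℝ) 1) : 0 < Real.sqrt (1-ρ^2) :=
  Real.sqrt_pos.2 (one_sub_sq_pos hρ)

lemma s_sq {ρ : ℝ} (hρ : ρ ∈ Ioo (-1:ℝ) 1) : (Real.sqrt (1-ρ^2))^2 = 1-ρ^2 :=
  Real.sq_sqrt (one_sub_sq_pos hρ).le

lemma hasDerivAt_gg (b x : ℝ) {ρ : ℝ} (hρ : ρ ∈ Ioo (-1:ℝ) 1) :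
    HasDerivAt (fun ρ => gg b ρ x) ((ρ*b - x)/(Real.sqrt (1-ρ^2))^3) ρ := by
  have hs := s_pos hρ
  have hs2 := s_sq hρ
  have hnum : HasDerivAt (fun ρ : ℝ => b - ρ*x) (-x) ρ := by
    simpa using ((hasDerivAt_id ρ).mul_const x).const_sub b
  have hu : HasDerivAt (fun ρ : ℝ => 1-ρ^2) (-(2*ρ)) ρ := by
    have := (hasDerivAt_pow 2 ρ).const_sub 1
    refine this.congr_deriv (Eq.symm ?_)
    simp
  have hden : HasDerivAt (fun ρ : ℝ => Real.sqrt (1-ρ^2))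
      (-(2*ρ) / (2 * Real.sqrt (1-ρ^2))) ρ := hu.sqrt (one_sub_sq_pos hρ).ne'
  have hdiv := hnum.div hden hs.ne'
  refine hdiv.congr_deriv (Eq.symm ?_)
  set s := Real.sqrt (1-ρ^2)
  have hinv : s * s⁻¹ = 1 := mul_inv_cancel₀ hs.ne'
  linear_combination (x*s⁻¹^3) * hs2 - (x*s*s⁻¹^2) * hinv


lemma hasDerivAt_integrand (b x : ℝ) {ρ : ℝ} (hρ : ρ ∈ Ioo (-1:ℝ) 1) :
    HasDerivAt (fun ρ => phiR x * PhiR (gg b ρ x)) (dI b ρ x) ρ := by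
  have h := ((hasDerivAt_PhiR (gg b ρ x)).comp ρ (hasDerivAt_gg b x hρ)).const_mul (phiR x)
  exact h

lemma hasDerivAt_H (b : ℝ) {ρ : ℝ} (hρ : ρ ∈ Ioo (-1:ℝ) 1) (x : ℝ) :
    HasDerivAt (fun x => Hfun b ρ x) (dI b ρ x) x := by
  have hs := s_pos hρ
  have hs2 := s_sq hρ
  set s := Real.sqrt (1-ρ^2) with hsdef
  have hgx : HasDerivAt (fun x => gg b ρ x) (-ρ/s) x := by
    have h0 : HasDerivAt (fun x : ℝ => b - ρ*x) (-ρ) x := by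
      simpa using ((hasDerivAt_id x).const_mul ρ).const_sub b
    exact h0.div_const s
  have h1 := hasDerivAt_phiR x
  have h2 := (hasDerivAt_phiR (gg b ρ x)).comp x hgx
  have h3 := (h1.mul h2).div_const s
  refine h3.congr_deriv (Eq.symm ?_)
  have hne : s ≠ 0 := hs.ne'
  set G := gg b ρ x with hG
  have hGs : G * s = b - ρ*x := by
    rw [hG, gg, ← hsdef]; field_simp
  simp only [dI, Function.comp]
  rw [← hG]
  have hinv : s * s⁻¹ = 1 := mul_inv_cancel₀ hne
  linear_combination (-(phiR x * phiR G * ρ * s⁻¹^3)) * hGs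
    + (phiR x * phiR G * ρ * G * s⁻¹^2 - phiR x * phiR G * x * s⁻¹ * (s * s⁻¹ + 1)) * hinv
    + (phiR x * phiR G * x * s⁻¹^3) * hs2

lemma tendsto_phiR_atBot : Tendsto phiR atBot (𝓝 0) := by
  have hup : ∀ᶠ x in atBot, phiR x ≤ (Real.sqrt (2*π))⁻¹ * Real.exp x := by
    filter_upwards [eventually_le_atBot (-2:ℝ)] with x hx
    rw [phiR_eq]
    apply mul_le_mul_of_nonneg_left _ (by positivity)
    apply Real.exp_le_exp.2
    nlinarith
  have hlo : ∀ᶠ x in atBot, 0 ≤ phiR x := Eventually.of_forall fun x => (phiR_pos x).le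
  have hexp : Tendsto (fun x => (Real.sqrt (2*π))⁻¹ * Real.exp x) atBot (𝓝 0) := by
    have := Real.tendsto_exp_atBot.const_mul (Real.sqrt (2*π))⁻¹
    simpa using this
  exact tendsto_of_tendsto_of_tendsto_of_le_of_le' tendsto_const_nhds hexp hlo hup

lemma tendsto_Hfun_atBot (b : ℝ) {ρ : ℝ} (hρ : ρ ∈ Ioo (-1:ℝ) 1) :
    Tendsto (fun x => Hfun b ρ x) atBot (𝓝 0) := by
  have hs := s_pos hρ
  have hup : ∀ᶠ x in atBot, Hfun b ρ x ≤ phiR x * (Real.sqrt (1-ρ^2))⁻¹ := by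
    filter_upwards with x
    rw [Hfun, div_eq_mul_inv]
    have h1 : phiR x * phiR (gg b ρ x) ≤ phiR x := by
      nlinarith [phiR_pos x, phiR_le (gg b ρ x), phiR_pos (gg b ρ x)]
    exact mul_le_mul_of_nonneg_right h1 (by positivity)
  have hlo : ∀ᶠ x in atBot, 0 ≤ Hfun b ρ x := Eventually.of_forall fun x =>
    div_nonneg (mul_nonneg (phiR_pos _).le (phiR_pos _).le) (Real.sqrt_nonneg _)
  have hbnd : Tendsto (fun x => phiR x * (Real.sqrt (1-ρ^2))⁻¹) atBot (𝓝 0) := by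
    simpa using tendsto_phiR_atBot.mul_const (Real.sqrt (1-ρ^2))⁻¹
  exact tendsto_of_tendsto_of_tendsto_of_le_of_le' tendsto_const_nhds hbnd hlo hup


lemma continuous_gg_x (b ρ : ℝ) : Continuous (fun x => gg b ρ x) := by
  unfold gg; fun_prop

lemma continuous_dI_x (b ρ : ℝ) : Continuous (fun x => dI b ρ x) := by
  unfold dI
  exact continuous_phiR.mul ((continuous_phiR.comp (continuous_gg_x b ρ)).mul (by fun_prop))

lemma dI_bound {ρ : ℝ} (hρ : ρ ∈ Ioo (-1:ℝ) 1) (b x m : ℝ) (hm : 0 < m)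
    (hms : m ≤ Real.sqrt (1-ρ^2)) :
    ‖dI b ρ x‖ ≤ phiR x * ((|b| + |x|)/m^3) := by
  have hs := s_pos hρ
  have hρ1 : |ρ| ≤ 1 := by
    rw [abs_le]; exact ⟨hρ.1.le, hρ.2.le⟩
  rw [dI, Real.norm_eq_abs, abs_mul, abs_mul, abs_of_pos (phiR_pos x), abs_of_pos (phiR_pos _)]
  have hnum : |ρ*b - x| ≤ |b| + |x| := by
    calc |ρ*b - x| ≤ |ρ*b| + |x| := abs_sub _ _
      _ ≤ |b| + |x| := by
        rw [abs_mul]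
        nlinarith [abs_nonneg b, abs_nonneg ρ]
  have habs : |(ρ*b - x)/(Real.sqrt (1-ρ^2))^3| = |ρ*b - x|/(Real.sqrt (1-ρ^2))^3 := by
    rw [abs_div]
    congr 1
    exact abs_of_pos (by positivity)
  rw [habs]
  have h1 : phiR (gg b ρ x) * (|ρ*b - x|/(Real.sqrt (1-ρ^2))^3)
      ≤ (|b| + |x|)/m^3 := by
    calc phiR (gg b ρ x) * (|ρ*b - x|/(Real.sqrt (1-ρ^2))^3)
        ≤ 1 * (|ρ*b - x|/(Real.sqrt (1-ρ^2))^3) :=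
          mul_le_mul_of_nonneg_right (phiR_le _) (by positivity)
      _ = |ρ*b - x|/(Real.sqrt (1-ρ^2))^3 := one_mul _
      _ ≤ (|b| + |x|)/m^3 := by
          gcongr
  exact mul_le_mul_of_nonneg_left h1 (phiR_pos x).le

lemma integrable_absGauss : Integrable (fun x => phiR x * |x|) := by
  have h := ((integrable_mul_exp_neg_mul_sq (by norm_num : (0:ℝ) < 1/2)).abs).const_mul (Real.sqrt (2*π))⁻¹
  apply h.congr
  filter_upwards with x
  rw [phiR_eq, abs_mul, abs_of_pos (Real.exp_pos _)]
  rw [show -(1/2 : ℝ) * x^2 = -(x^2)/2 by ring]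
  ring

lemma integrable_bound (b m : ℝ) : Integrable (fun x => phiR x * ((|b| + |x|)/m^3)) := by
  have h1 : Integrable (fun x => (phiR x * |b| + phiR x * |x|) * (m^3)⁻¹) :=
    ((integrable_phiR.mul_const _).add integrable_absGauss).mul_const _
  apply h1.congr
  filter_upwards with x
  ring

lemma aesm_integrand (b ρ : ℝ) :
    AEStronglyMeasurable (fun x => phiR x * PhiR (gg b ρ x)) (volume.restrict (Iic (a : ℝ))) :=
  ((continuous_phiR.mul (continuous_PhiR.comp (continuous_gg_x b ρ))).aestronglyMeasurable)

lemma hasDerivAt_G (a b : ℝ) {ρ0 : ℝ} (hρ0 : ρ0 ∈ Ioo (-1:ℝ) 1) :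
    HasDerivAt (fun ρ => ∫ x in Iic a, phiR x * PhiR (gg b ρ x))
      (∫ x in Iic a, dI b ρ0 x) ρ0 := by
  obtain ⟨h1, h2⟩ := hρ0
  have habs : |ρ0| < 1 := abs_lt.2 ⟨h1, h2⟩
  set ε := (1 - |ρ0|)/2 with hε
  have hεpos : 0 < ε := by
    rw [hε]; linarith
  set r := (1 + |ρ0|)/2 with hr
  have hr1 : r < 1 := by rw [hr]; linarith
  have hr0 : 0 < r := by rw [hr]; positivity
  have hball : ∀ ρ ∈ ball ρ0 ε, |ρ| ≤ r ∧ ρ ∈ Ioo (-1:ℝ) 1 := by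
    intro ρ hρ
    rw [mem_ball, Real.dist_eq] at hρ
    have habs2 : |ρ| ≤ r := by
      have := abs_sub_abs_le_abs_sub ρ ρ0
      rw [hr]; rw [hε] at hρ; linarith
    refine ⟨habs2, ?_⟩
    have : |ρ| < 1 := lt_of_le_of_lt habs2 hr1
    rw [abs_lt] at this
    exact ⟨this.1, this.2⟩
  set m := Real.sqrt (1 - r^2) with hm'
  have hm : 0 < m := Real.sqrt_pos.2 (by nlinarith)
  have hms : ∀ ρ ∈ ball ρ0 ε, m ≤ Real.sqrt (1-ρ^2) := by
    intro ρ hρ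
    apply Real.sqrt_le_sqrt
    have h3 := (hball ρ hρ).1
    nlinarith [abs_nonneg ρ, sq_abs ρ]
  have key := hasDerivAt_integral_of_dominated_loc_of_deriv_le
      (μ := volume.restrict (Iic a))
      (F := fun ρ x => phiR x * PhiR (gg b ρ x)) (F' := fun ρ x => dI b ρ x)
      (x₀ := ρ0) (bound := fun x => phiR x * ((|b| + |x|)/m^3)) (ball_mem_nhds ρ0 hεpos)
      (Eventually.of_forall fun ρ => aesm_integrand (a := a) b ρ)
      ?_ ((continuous_dI_x b ρ0).aestronglyMeasurable)
      (Eventually.of_forall fun x ρ hρ => dI_bound (hball ρ hρ).2 b x m hm (hms ρ hρ))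
      ((integrable_bound b m).restrict)
      (Eventually.of_forall fun x ρ hρ => hasDerivAt_integrand b x (hball ρ hρ).2)
  · exact key.2
  · apply (integrable_phiR.restrict (s := Iic a)).mono' (aesm_integrand b ρ0)
    filter_upwards with x
    rw [Real.norm_eq_abs, abs_mul, abs_of_pos (phiR_pos x), abs_of_nonneg (PhiR_nonneg _)]
    calc phiR x * PhiR (gg b ρ0 x) ≤ phiR x * 1 :=
      mul_le_mul_of_nonneg_left (PhiR_le_one _) (phiR_pos x).le
    _ = phiR x := mul_one _

lemma integrableOn_dI (a b : ℝ) {ρ : ℝ} (hρ : ρ ∈ Ioo (-1:ℝ) 1) :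
    IntegrableOn (fun x => dI b ρ x) (Iic a) := by
  apply ((integrable_bound b (Real.sqrt (1-ρ^2))).restrict (s := Iic a)).mono'
    (continuous_dI_x b ρ).aestronglyMeasurable
  filter_upwards with x
  exact dI_bound hρ b x _ (s_pos hρ) le_rfl

lemma integral_dI (a b : ℝ) {ρ : ℝ} (hρ : ρ ∈ Ioo (-1:ℝ) 1) :
    ∫ x in Iic a, dI b ρ x = Hfun b ρ a := by
  have h := integral_Iic_of_hasDerivAt_of_tendsto' (a := a)
    (f := fun x => Hfun b ρ x) (f' := fun x => dI b ρ x)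
    (fun x _ => hasDerivAt_H b hρ x) (integrableOn_dI a b hρ)
    (tendsto_Hfun_atBot b hρ)
  rw [h, sub_zero]

lemma Hfun_pos (b a : ℝ) {ρ : ℝ} (hρ : ρ ∈ Ioo (-1:ℝ) 1) : 0 < Hfun b ρ a :=
  div_pos (mul_pos (phiR_pos _) (phiR_pos _)) (s_pos hρ)

lemma G_strictMonoOn (a b : ℝ) :
    StrictMonoOn (fun ρ => ∫ x in Iic a, phiR x * PhiR (gg b ρ x)) (Ioo (-1:ℝ) 1) := by
  apply strictMonoOn_of_hasDerivWithinAt_pos (convex_Ioo _ _)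
    (f' := fun ρ => Hfun b ρ a)
  · intro ρ hρ
    exact (hasDerivAt_G a b hρ).continuousAt.continuousWithinAt
  · intro ρ hρ
    rw [interior_Ioo] at hρ
    have := hasDerivAt_G a b hρ
    rw [integral_dI a b hρ] at this
    exact this.hasDerivWithinAt
  · intro ρ hρ
    rw [interior_Ioo] at hρ
    exact Hfun_pos b a hρ


lemma Phi2_lt (a b : ℝ) {ρ1 ρ2 : ℝ} (h1 : ρ1 ∈ Ioo (-1:ℝ) 1)
    (h2 : ρ2 ∈ Ioo (-1:ℝ) 1) (hlt : ρ1 < ρ2) :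
    Phi2 (a : EReal) (b : EReal) ρ1 < Phi2 (a : EReal) (b : EReal) ρ2 := by
  rw [Phi2_coe a b h1, Phi2_coe a b h2]
  exact G_strictMonoOn a b h1 h2 hlt

end FobAux

lemma sum_id (l : ℕ) (hl : 2 ≤ l) (p c : ℕ → ℝ) (hc0 : c 0 = 0) :
    ∑ r ∈ Finset.Icc 1 (l-1), (p r * c (r+1) - c r * p (r+1))
      = (∑ r ∈ Finset.Icc 1 (l-1), p r * (c (r+1) - c (r-1))) - c (l-1) * p l := by
  have hl1 : 1 ≤ l - 1 := by omega
  set g : ℕ → ℝ := fun r => c (r-1) * p r with hg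
  have h1 : ∑ r ∈ Finset.Icc 1 (l-1), c r * p (r+1) = ∑ r ∈ Finset.Icc 2 l, g r := by
    have hmap : Finset.Icc 2 l = Finset.map (addRightEmbedding 1) (Finset.Icc 1 (l-1)) := by
      rw [Finset.map_add_right_Icc]
      congr 1 <;> omega
    rw [hmap, Finset.sum_map]
    apply Finset.sum_congr rfl
    intro r hr
    simp [g, addRightEmbedding]
  have h2 : ∑ r ∈ Finset.Icc 1 l, g r = (∑ r ∈ Finset.Icc 1 (l-1), g r) + g l := by
    have : l = (l-1) + 1 := by omega
    rw [this, Finset.sum_Icc_succ_top (by omega : 1 ≤ (l-1)+1)]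
    congr 2 <;> omega
  have h3 : ∑ r ∈ Finset.Icc 1 l, g r = g 1 + ∑ r ∈ Finset.Icc 2 l, g r := by
    have hins : Finset.Icc 1 l = insert 1 (Finset.Icc 2 l) := by
      ext x
      simp only [Finset.mem_Icc, Finset.mem_insert]
      omega
    rw [hins, Finset.sum_insert (by simp)]
  have hg1 : g 1 = 0 := by simp [g, hc0]
  have h4 : ∑ r ∈ Finset.Icc 2 l, g r = (∑ r ∈ Finset.Icc 1 (l-1), g r) + g l := by
    have := h2
    rw [h3, hg1, zero_add] at this
    exact this
  have hgl : g l = c (l-1) * p l := rfl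
  rw [Finset.sum_sub_distrib, h1, h4, hgl]
  have h5 : ∑ r ∈ Finset.Icc 1 (l-1), p r * (c (r+1) - c (r-1))
      = (∑ r ∈ Finset.Icc 1 (l-1), p r * c (r+1)) - ∑ r ∈ Finset.Icc 1 (l-1), g r := by
    rw [← Finset.sum_sub_distrib]
    apply Finset.sum_congr rfl
    intro r hr
    simp only [g]
    ring
  rw [h5]
  ring

/-- the ordinal–binary bridging function `F_ob` is strictly increasing
on `(−1, 1)` (invertibility, Theorem 2). -/
theorem Fob_strictMono
    (l : ℕ) (hl : 2 ≤ l) (Δ : ℕ → EReal)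
    (hΔ0 : Δ 0 = ⊥) (hΔl : Δ l = ⊤) (hΔmono : ∀ m < l, Δ m < Δ (m + 1))
    (Δb : ℝ) :
    StrictMonoOn (fun ρ : ℝ =>
        2 * ∑ r ∈ Finset.Icc 1 (l - 1),
          (Phi2 (Δ r) (Δb : EReal) ρ * stdPhi (Δ (r + 1))
            - stdPhi (Δ r) * Phi2 (Δ (r + 1)) (Δb : EReal) ρ))
      (Set.Ioo (-1 : ℝ) 1) := by
  intro ρ1 hρ1 ρ2 hρ2 hlt
  simp only []
  have hmono' : ∀ i j, i < j → j ≤ l → Δ i < Δ j := by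
    intro i j hij
    induction j with
    | zero => omega
    | succ n ih =>
      intro hjl
      rcases Nat.lt_succ_iff_lt_or_eq.1 hij with h | h
      · exact lt_trans (ih h (by omega)) (hΔmono n (by omega))
      · subst h; exact hΔmono i (by omega)
  have hfin : ∀ r, 1 ≤ r → r ≤ l-1 → Δ r = (((Δ r).toReal : ℝ) : EReal) := by
    intro r h1 h2
    have hbot : Δ r ≠ ⊥ := by
      have h := hmono' 0 r (by omega) (by omega)
      rw [hΔ0] at h
      exact h.ne'
    have htop : Δ r ≠ ⊤ := by
      have h := hmono' r l (by omega) le_rfl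
      rw [hΔl] at h
      exact h.ne
    exact (EReal.coe_toReal htop hbot).symm
  have hc0 : stdPhi (Δ 0) = 0 := by rw [hΔ0]; exact FobAux.stdPhi_bot
  have hcl : stdPhi (Δ l) = 1 := by rw [hΔl]; exact FobAux.stdPhi_top
  have hstd : ∀ i j, i < j → j ≤ l → stdPhi (Δ i) < stdPhi (Δ j) := by
    intro i j hij hjl
    have hi_cases : i = 0 ∨ (1 ≤ i ∧ i ≤ l-1) := by omega
    have hj_cases : j = l ∨ (1 ≤ j ∧ j ≤ l-1) := by omega
    rcases hi_cases with hi | hi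
    · subst hi
      rw [hc0]
      rcases hj_cases with hj | hj
      · rw [hj, hcl]; norm_num
      · rw [hfin j hj.1 hj.2, FobAux.stdPhi_coe]
        exact FobAux.PhiR_pos _
    · rcases hj_cases with hj | hj
      · subst hj
        rw [hcl, hfin i hi.1 hi.2, FobAux.stdPhi_coe]
        exact FobAux.PhiR_lt_one _
      · have hltE := hmono' i j hij (by omega)
        rw [hfin i hi.1 hi.2, hfin j hj.1 hj.2] at hltE ⊢
        rw [FobAux.stdPhi_coe, FobAux.stdPhi_coe]
        exact FobAux.PhiR_strictMono (by exact_mod_cast hltE)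
  have e1 := sum_id l hl (fun r => Phi2 (Δ r) (Δb : EReal) ρ1)
    (fun r => stdPhi (Δ r)) hc0
  have e2 := sum_id l hl (fun r => Phi2 (Δ r) (Δb : EReal) ρ2)
    (fun r => stdPhi (Δ r)) hc0
  rw [e1, e2]
  have hPl1 : Phi2 (Δ l) (Δb : EReal) ρ1 = FobAux.PhiR Δb := by
    rw [hΔl]; exact FobAux.Phi2_top Δb hρ1
  have hPl2 : Phi2 (Δ l) (Δb : EReal) ρ2 = FobAux.PhiR Δb := by
    rw [hΔl]; exact FobAux.Phi2_top Δb hρ2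
  rw [hPl1, hPl2]
  have hsum : (∑ r ∈ Finset.Icc 1 (l-1),
        Phi2 (Δ r) (Δb : EReal) ρ1 * (stdPhi (Δ (r+1)) - stdPhi (Δ (r-1))))
      < ∑ r ∈ Finset.Icc 1 (l-1),
        Phi2 (Δ r) (Δb : EReal) ρ2 * (stdPhi (Δ (r+1)) - stdPhi (Δ (r-1))) := by
    apply Finset.sum_lt_sum_of_nonempty
    · exact ⟨1, by simp only [Finset.mem_Icc]; omega⟩
    · intro r hr
      rw [Finset.mem_Icc] at hr
      have hw : 0 < stdPhi (Δ (r+1)) - stdPhi (Δ (r-1)) :=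
        sub_pos.2 (hstd (r-1) (r+1) (by omega) (by omega))
      have hP : Phi2 (Δ r) (Δb : EReal) ρ1 < Phi2 (Δ r) (Δb : EReal) ρ2 := by
        rw [hfin r hr.1 hr.2]
        exact FobAux.Phi2_lt _ Δb hρ1 hρ2 hlt
      exact mul_lt_mul_of_pos_right hP hw
  linarith
end
end
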